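/- arXiv:2311.16418 — 5 statements merged into one kernel-verified Lean document; each statement's English description precedes it below -/
import Mathlib

section
/- Let Cₙ ↔ fₙ : [a,b] → ℝ^M (n = 1, 2, …) and C ↔ f : [a,b] → ℝ^M be curves (a < b), and assume fₙ converges pointwise to f on [a,b]. Then ℓ(C) ≤ liminf_{n→∞} ℓ(Cₙ) (lower semicontinuity of length under pointwise convergence). -/
open scoped BigOperators ENNReal
open MeasureTheory Filter

noncomputable section

/-- A partition `a = x 0 < x 1 < ⋯ < x n = b` of the interval `[a,b]`. -/
structure IntervalPartition (a b : ℝ) where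
  n : ℕ
  x : Fin (n + 1) → ℝ
  mono : StrictMono x
  first : x 0 = a
  last : x (Fin.last n) = b

/-- The mesh `‖P‖ = maxᵢ (xᵢ − xᵢ₋₁)` of a partition. -/
def IntervalPartition.mesh {a b : ℝ} (P : IntervalPartition a b) : ℝ :=
  ⨆ i : Fin P.n, (P.x i.succ - P.x i.castSucc)

/-- The inscribed sum `V(f;P) = Σᵢ ‖f(xᵢ) − f(xᵢ₋₁)‖`. -/
def inscribedSum {M : ℕ} (f : ℝ → EuclideanSpace ℝ (Fin M)) {a b : ℝ}
    (P : IntervalPartition a b) : ℝ :=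
  ∑ i : Fin P.n, ‖f (P.x i.succ) - f (P.x i.castSucc)‖

/-- The length `ℓ(C)` of the curve `C ↔ f : [a,b] → ℝ^M`: the supremum of the inscribed sums
over all partitions of `[a,b]`, a value in `[0,+∞]`. -/
def curveLength {M : ℕ} (f : ℝ → EuclideanSpace ℝ (Fin M)) (a b : ℝ) : ℝ≥0∞ :=
  ⨆ P : IntervalPartition a b, ENNReal.ofReal (inscribedSum f P)

/-- The total variation `T_h[a,b]` of a real function `h` on `[a,b]`. -/
def totalVariation (h : ℝ → ℝ) (a b : ℝ) : ℝ≥0∞ :=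
  ⨆ P : IntervalPartition a b, ENNReal.ofReal (∑ i : Fin P.n, |h (P.x i.succ) - h (P.x i.castSucc)|)

/-- The positive variation `T_h⁺[a,b]` of a real function `h` on `[a,b]`. -/
def posVariation (h : ℝ → ℝ) (a b : ℝ) : ℝ≥0∞ :=
  ⨆ P : IntervalPartition a b,
    ENNReal.ofReal (∑ i : Fin P.n, max (h (P.x i.succ) - h (P.x i.castSucc)) 0)

/-- The negative variation `T_h⁻[a,b]` of a real function `h` on `[a,b]`. -/
def negVariation (h : ℝ → ℝ) (a b : ℝ) : ℝ≥0∞ :=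
  ⨆ P : IntervalPartition a b,
    ENNReal.ofReal (∑ i : Fin P.n, max (h (P.x i.castSucc) - h (P.x i.succ)) 0)

/-- `h` is absolutely continuous on `[a,b]`: for every `ε > 0` there is `δ > 0` such that
`Σᵢ |h(vᵢ) − h(uᵢ)| < ε` for every finite family of pairwise non-overlapping subintervals
`[uᵢ,vᵢ]` of `[a,b]` of total length `< δ`. -/
def AbsContOn (h : ℝ → ℝ) (a b : ℝ) : Prop :=
  ∀ ε > (0 : ℝ), ∃ δ > (0 : ℝ), ∀ n : ℕ, ∀ u v : Fin n → ℝ,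
    (∀ i, a ≤ u i ∧ u i ≤ v i ∧ v i ≤ b) →
    (∀ i j, i ≠ j → Set.Ioo (u i) (v i) ∩ Set.Ioo (u j) (v j) = ∅) →
    (∑ i, (v i - u i)) < δ → (∑ i, |h (v i) - h (u i)|) < ε

/-- `φ` is an increasing homeomorphism of `[a,b]` onto `[c,d]` sending `a` to `c` and `b` to `d`. -/
def IsIncrHomeo (φ : ℝ → ℝ) (a b c d : ℝ) : Prop :=
  ContinuousOn φ (Set.Icc a b) ∧ StrictMonoOn φ (Set.Icc a b) ∧ φ a = c ∧ φ b = d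

/-- `f : [a,b] → ℝ^M` and `g : [c,d] → ℝ^M` are Fréchet equivalent. -/
def FrechetEquiv {M : ℕ} (f : ℝ → EuclideanSpace ℝ (Fin M)) (a b : ℝ)
    (g : ℝ → EuclideanSpace ℝ (Fin M)) (c d : ℝ) : Prop :=
  ∀ ε > (0 : ℝ), ∃ φ : ℝ → ℝ, IsIncrHomeo φ a b c d ∧
    ∀ x ∈ Set.Icc a b, ‖f x - g (φ x)‖ < ε

/-- The Fréchet distance between the curves `C ↔ f : [a,b] → ℝ^M` and `D ↔ g : [c,d] → ℝ^M`. -/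
def frechetDist {M : ℕ} (f : ℝ → EuclideanSpace ℝ (Fin M)) (a b : ℝ)
    (g : ℝ → EuclideanSpace ℝ (Fin M)) (c d : ℝ) : ℝ :=
  ⨅ φ : {φ : ℝ → ℝ // IsIncrHomeo φ a b c d}, ⨆ x ∈ Set.Icc a b, ‖f x - g (φ.1 x)‖

/-- A parametric integrand: a continuous `F : ℝ^M × ℝ^M → ℝ` positively homogeneous of
degree 1 in the second variable. -/
def IsParametricIntegrand {M : ℕ}
    (F : EuclideanSpace ℝ (Fin M) → EuclideanSpace ℝ (Fin M) → ℝ) : Prop :=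
  Continuous (fun p : EuclideanSpace ℝ (Fin M) × EuclideanSpace ℝ (Fin M) => F p.1 p.2) ∧
  ∀ K : ℝ, 0 ≤ K → ∀ x t, F x (K • t) = K * F x t

/-- `L` is the line integral `∫_C F` of `F` along the curve `C ↔ f : [a,b] → ℝ^M`:
the limit, as the mesh tends to `0`, of the Riemann-type sums
`Σᵢ F(f(ξᵢ), f(xᵢ) − f(xᵢ₋₁))` over tagged partitions of `[a,b]`. -/
def IsLineIntegral {M : ℕ} (F : EuclideanSpace ℝ (Fin M) → EuclideanSpace ℝ (Fin M) → ℝ)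
    (f : ℝ → EuclideanSpace ℝ (Fin M)) (a b : ℝ) (L : ℝ) : Prop :=
  ∀ ε > (0 : ℝ), ∃ δ > (0 : ℝ), ∀ P : IntervalPartition a b, P.mesh < δ →
    ∀ ξ : Fin P.n → ℝ, (∀ i, ξ i ∈ Set.Icc (P.x i.castSucc) (P.x i.succ)) →
    |(∑ i : Fin P.n, F (f (ξ i)) (f (P.x i.succ) - f (P.x i.castSucc))) - L| < ε

/-- Lower semicontinuity of length under pointwise convergence: if `fₙ → f`
pointwise on `[a,b]`, then `ℓ(C) ≤ liminfₙ ℓ(Cₙ)`. -/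
theorem length_le_liminf_of_pointwise {M : ℕ} (a b : ℝ) (hab : a < b)
    (fn : ℕ → ℝ → EuclideanSpace ℝ (Fin M)) (f : ℝ → EuclideanSpace ℝ (Fin M))
    (hconv : ∀ t ∈ Set.Icc a b, Tendsto (fun n => fn n t) atTop (nhds (f t))) :
    curveLength f a b ≤ liminf (fun n => curveLength (fn n) a b) atTop := by
  refine iSup_le fun P => ?_
  have hmem : ∀ i : Fin (P.n + 1), P.x i ∈ Set.Icc a b := by
    intro i
    constructor
    · have := P.mono.monotone (Fin.zero_le i); rwa [P.first] at this
    · have := P.mono.monotone (Fin.le_last i); rwa [P.last] at this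
  have htend : Tendsto (fun n => inscribedSum (fn n) P) atTop (nhds (inscribedSum f P)) := by
    unfold inscribedSum
    apply tendsto_finset_sum
    intro i _
    exact ((hconv _ (hmem _)).sub (hconv _ (hmem _))).norm
  have h2 : Tendsto (fun n => ENNReal.ofReal (inscribedSum (fn n) P)) atTop
      (nhds (ENNReal.ofReal (inscribedSum f P))) :=
    (ENNReal.continuous_ofReal.tendsto _).comp htend
  calc ENNReal.ofReal (inscribedSum f P)
      = liminf (fun n => ENNReal.ofReal (inscribedSum (fn n) P)) atTop := h2.liminf_eq.symm
    _ ≤ liminf (fun n => curveLength (fn n) a b) atTop :=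
        liminf_le_liminf (Eventually.of_forall fun n =>
          le_iSup (fun Q => ENNReal.ofReal (inscribedSum (fn n) Q)) P)

end
end

section
/- Let C ↔ f : [a,b] → ℝ^M (a < b) be a continuous and rectifiable curve with components f₁, …, f_M, and let s(x) = ℓ of f restricted to [a,x] be its arc length function. Then s is absolutely continuous on [a,b] if and only if every component f₁, …, f_M is absolutely continuous on [a,b]. -/
open scoped BigOperators ENNReal
open MeasureTheory Filter

noncomputable section

-- ======== helpers start ========

namespace IntervalPartition
variable {a b : ℝ}

/-- Extended node function. -/
def xe (P : IntervalPartition a b) : ℕ → ℝ := fun i => P.x ⟨min i P.n, Nat.lt_succ_of_le (min_le_right _ _)⟩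

lemma xe_of_le (P : IntervalPartition a b) {i : ℕ} (h : i ≤ P.n) : P.xe i = P.x ⟨i, by omega⟩ := by
  simp [xe, min_eq_left h]

lemma xe_zero (P : IntervalPartition a b) : P.xe 0 = a := by
  rw [xe_of_le P (Nat.zero_le _)]; exact P.first

lemma xe_n (P : IntervalPartition a b) : P.xe P.n = b := by
  rw [xe_of_le P le_rfl]; exact P.last

lemma xe_lt (P : IntervalPartition a b) {i j : ℕ} (hij : i < j) (hj : j ≤ P.n) : P.xe i < P.xe j := by
  rw [xe_of_le P (le_of_lt (lt_of_lt_of_le hij hj)), xe_of_le P hj]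
  exact P.mono (by simp [Fin.mk_lt_mk]; omega)

lemma xe_le (P : IntervalPartition a b) {i j : ℕ} (hij : i ≤ j) : P.xe i ≤ P.xe j := by
  unfold xe
  exact P.mono.monotone (by simp [Fin.mk_le_mk]; omega)

lemma xe_mem (P : IntervalPartition a b) (i : ℕ) : a ≤ P.xe i ∧ P.xe i ≤ b := by
  constructor
  · have h1 : P.x 0 ≤ P.xe i := P.mono.monotone (by simp [Fin.le_def])
    rwa [P.first] at h1
  · have h1 : P.xe i ≤ P.x (Fin.last P.n) := P.mono.monotone (by simp [Fin.le_def])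
    rwa [P.last] at h1

lemma le_of_partition (P : IntervalPartition a b) : a ≤ b := by
  have h := (P.xe_mem 0).2
  rwa [P.xe_zero] at h

lemma x_succ_eq (P : IntervalPartition a b) (i : Fin P.n) : P.x i.succ = P.xe (i + 1) := by
  rw [xe_of_le P (by omega)]; rfl

lemma x_castSucc_eq (P : IntervalPartition a b) (i : Fin P.n) : P.x i.castSucc = P.xe i := by
  rw [xe_of_le P (by omega)]; rfl

end IntervalPartition

lemma inscribedSum_eq_range {M : ℕ} (f : ℝ → EuclideanSpace ℝ (Fin M)) {a b : ℝ}
    (P : IntervalPartition a b) :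
    inscribedSum f P = ∑ i ∈ Finset.range P.n, ‖f (P.xe (i + 1)) - f (P.xe i)‖ := by
  rw [← Fin.sum_univ_eq_sum_range (fun i => ‖f (P.xe (i + 1)) - f (P.xe i)‖) P.n]
  unfold inscribedSum
  exact Finset.sum_congr rfl fun i _ => by rw [P.x_succ_eq, P.x_castSucc_eq]

lemma inscribedSum_nonneg {M : ℕ} (f : ℝ → EuclideanSpace ℝ (Fin M)) {a b : ℝ}
    (P : IntervalPartition a b) : 0 ≤ inscribedSum f P :=
  Finset.sum_nonneg fun _ _ => norm_nonneg _

lemma partition_telescope {a b : ℝ} (P : IntervalPartition a b) :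
    ∑ i : Fin P.n, (P.x i.succ - P.x i.castSucc) = b - a := by
  have : ∀ i : Fin P.n, P.x i.succ - P.x i.castSucc = P.xe (i + 1) - P.xe i := fun i => by
    rw [P.x_succ_eq, P.x_castSucc_eq]
  rw [Finset.sum_congr rfl fun i _ => this i,
    Fin.sum_univ_eq_sum_range (fun i => P.xe (i + 1) - P.xe i) P.n,
    Finset.sum_range_sub, P.xe_n, P.xe_zero]

lemma ofReal_inscribedSum_le {M : ℕ} (f : ℝ → EuclideanSpace ℝ (Fin M)) {a b : ℝ}
    (P : IntervalPartition a b) : ENNReal.ofReal (inscribedSum f P) ≤ curveLength f a b :=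
  le_iSup (fun P => ENNReal.ofReal (inscribedSum f P)) P

def IntervalPartition.refl (a : ℝ) : IntervalPartition a a where
  n := 0
  x := fun _ => a
  mono := fun i j hij => absurd (Fin.lt_iff_val_lt_val.mp hij) (by omega)
  first := rfl
  last := rfl

def IntervalPartition.single {a b : ℝ} (h : a < b) : IntervalPartition a b where
  n := 1
  x := ![a, b]
  mono := by
    rw [Fin.strictMono_iff_lt_succ]
    intro i
    fin_cases i <;> simpa using h
  first := rfl
  last := rfl

lemma partition_nonempty {a b : ℝ} (h : a ≤ b) : Nonempty (IntervalPartition a b) := by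
  rcases eq_or_lt_of_le h with rfl | h
  · exact ⟨IntervalPartition.refl a⟩
  · exact ⟨IntervalPartition.single h⟩

/-- Concatenation of partitions. -/
def IntervalPartition.concat {a b c : ℝ} (P : IntervalPartition a b) (Q : IntervalPartition b c) : IntervalPartition a c where
  n := P.n + Q.n
  x := fun k => if (k : ℕ) ≤ P.n then P.xe k else Q.xe (k - P.n)
  mono := by
    rw [Fin.strictMono_iff_lt_succ]
    intro i
    have hi : (i : ℕ) < P.n + Q.n := i.isLt
    simp only [Fin.coe_castSucc, Fin.val_succ]
    rcases lt_trichotomy ((i : ℕ) + 1) P.n with h | h | h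
    · rw [if_pos (by omega), if_pos (by omega)]
      exact P.xe_lt (by omega) (by omega)
    · rw [if_pos (by omega), if_pos (by omega)]
      exact P.xe_lt (by omega) (by omega)
    · rcases lt_trichotomy (i : ℕ) P.n with h2 | h2 | h2
      · -- i + 1 = P.n + 1? no: i < P.n < i + 1 means i + 1 = P.n impossible here; i = P.n - 1... 
        omega
      · -- i = P.n, so i + 1 = P.n + 1 > P.n, and Q.n > 0
        rw [if_pos (by omega), if_neg (by omega)]
        have h3 : (i : ℕ) + 1 - P.n = 1 := by omega
        rw [h3, h2, P.xe_n]
        have h4 := Q.xe_lt (show 0 < 1 by omega) (by omega)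
        rwa [Q.xe_zero] at h4
      · rw [if_neg (by omega), if_neg (by omega)]
        have h3 : (i : ℕ) + 1 - P.n = ((i : ℕ) - P.n) + 1 := by omega
        rw [h3]
        exact Q.xe_lt (by omega) (by omega)
  first := by
    simp only [Fin.val_zero, Nat.zero_le, if_pos]
    exact P.xe_zero
  last := by
    rcases Nat.eq_zero_or_pos Q.n with hq | hq
    · have hbc : b = c := by
        have := Q.last
        rw [show Fin.last Q.n = 0 by ext; simp [hq], Q.first] at this
        exact this
      simp only [Fin.val_last, hq, Nat.add_zero, le_refl, if_pos]
      rw [P.xe_n, hbc]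
    · simp only [Fin.val_last]
      rw [if_neg (by omega), Nat.add_sub_cancel_left, Q.xe_n]

lemma IntervalPartition.concat_xe {a b c : ℝ} (P : IntervalPartition a b) (Q : IntervalPartition b c) {j : ℕ}
    (hj : j ≤ P.n + Q.n) :
    (P.concat Q).xe j = if j ≤ P.n then P.xe j else Q.xe (j - P.n) := by
  rw [IntervalPartition.xe_of_le _ (by exact hj)]
  rfl

lemma inscribedSum_concat {M : ℕ} (f : ℝ → EuclideanSpace ℝ (Fin M)) {a b c : ℝ}
    (P : IntervalPartition a b) (Q : IntervalPartition b c) :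
    inscribedSum f (P.concat Q) = inscribedSum f P + inscribedSum f Q := by
  rw [inscribedSum_eq_range, inscribedSum_eq_range, inscribedSum_eq_range]
  have hsplit : Finset.range (P.concat Q).n = Finset.Ico 0 (P.n + Q.n) := by
    rw [Finset.range_eq_Ico]; rfl
  rw [hsplit, ← Finset.sum_Ico_consecutive _ (Nat.zero_le P.n) (Nat.le_add_right P.n Q.n)]
  congr 1
  · rw [← Finset.range_eq_Ico]
    apply Finset.sum_congr rfl
    intro i hi
    rw [Finset.mem_range] at hi
    rw [P.concat_xe Q (by omega), P.concat_xe Q (by omega), if_pos (by omega), if_pos (by omega)]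
  · rw [Finset.sum_Ico_eq_sum_range]
    simp only [Nat.add_sub_cancel_left]
    apply Finset.sum_congr rfl
    intro i hi
    rw [Finset.mem_range] at hi
    have h1 : (P.concat Q).xe (P.n + i) = Q.xe i := by
      rw [P.concat_xe Q (by omega)]
      rcases Nat.eq_zero_or_pos i with rfl | hpos
      · rw [if_pos (by omega)]
        simp [P.xe_n, Q.xe_zero]
      · rw [if_neg (by omega), Nat.add_sub_cancel_left]
    have h2 : (P.concat Q).xe (P.n + i + 1) = Q.xe (i + 1) := by
      rw [P.concat_xe Q (by omega), if_neg (by omega)]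
      congr 1
      omega
    rw [h1, h2]

lemma clen_concat {M : ℕ} (f : ℝ → EuclideanSpace ℝ (Fin M)) {a b c : ℝ}
    (hab : a ≤ b) (hbc : b ≤ c) :
    curveLength f a b + curveLength f b c ≤ curveLength f a c := by
  have h1 : Nonempty (IntervalPartition a b) := partition_nonempty hab
  have h2 : Nonempty (IntervalPartition b c) := partition_nonempty hbc
  rw [curveLength, curveLength, ENNReal.iSup_add]
  apply iSup_le
  intro P
  rw [ENNReal.add_iSup]
  apply iSup_le
  intro Q
  rw [← ENNReal.ofReal_add (inscribedSum_nonneg f P) (inscribedSum_nonneg f Q),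
    ← inscribedSum_concat f P Q]
  exact ofReal_inscribedSum_le f _

lemma clen_mono_left {M : ℕ} (f : ℝ → EuclideanSpace ℝ (Fin M)) {a b c : ℝ}
    (hab : a ≤ b) (hbc : b ≤ c) : curveLength f a b ≤ curveLength f a c :=
  le_trans le_self_add (clen_concat f hab hbc)

lemma clen_mono_right {M : ℕ} (f : ℝ → EuclideanSpace ℝ (Fin M)) {a b c : ℝ}
    (hab : a ≤ b) (hbc : b ≤ c) : curveLength f b c ≤ curveLength f a c :=
  le_trans le_add_self (clen_concat f hab hbc)

lemma ofReal_norm_le_clen {M : ℕ} (f : ℝ → EuclideanSpace ℝ (Fin M)) {a b : ℝ} (hab : a ≤ b) :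
    ENNReal.ofReal ‖f b - f a‖ ≤ curveLength f a b := by
  rcases eq_or_lt_of_le hab with rfl | h
  · simp
  · have := ofReal_inscribedSum_le f (IntervalPartition.single h)
    have hs : inscribedSum f (IntervalPartition.single h) = ‖f b - f a‖ := by
      unfold inscribedSum IntervalPartition.single
      simp [Fin.sum_univ_one]
    rwa [hs] at this

/-- Sub-partition of `R` from node `j` to node `k`. -/
def IntervalPartition.sub {u w : ℝ} (R : IntervalPartition u w) (j k : ℕ) {c d : ℝ} (hjk : j ≤ k)
    (hk : k ≤ R.n) (hc : R.xe j = c) (hd : R.xe k = d) : IntervalPartition c d where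
  n := k - j
  x := fun i => R.xe (j + i)
  mono := by
    rw [Fin.strictMono_iff_lt_succ]
    intro i
    have hi : (i : ℕ) < k - j := i.isLt
    simp only [Fin.coe_castSucc, Fin.val_succ]
    exact R.xe_lt (by omega) (by omega)
  first := by
    simp only [Fin.val_zero, Nat.add_zero]
    exact hc
  last := by
    simp only [Fin.val_last]
    rw [show j + (k - j) = k by omega]
    exact hd

lemma IntervalPartition.sub_xe {u w : ℝ} (R : IntervalPartition u w) (j k : ℕ) {c d : ℝ} (hjk : j ≤ k)
    (hk : k ≤ R.n) (hc : R.xe j = c) (hd : R.xe k = d) {i : ℕ} (hi : i ≤ k - j) :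
    (R.sub j k hjk hk hc hd).xe i = R.xe (j + i) := by
  rw [IntervalPartition.xe_of_le _ (by exact hi)]
  rfl

lemma inscribedSum_sub {M : ℕ} (f : ℝ → EuclideanSpace ℝ (Fin M)) {u w : ℝ}
    (R : IntervalPartition u w) (j k : ℕ) {c d : ℝ} (hjk : j ≤ k) (hk : k ≤ R.n)
    (hc : R.xe j = c) (hd : R.xe k = d) :
    inscribedSum f (R.sub j k hjk hk hc hd) =
      ∑ i ∈ Finset.Ico j k, ‖f (R.xe (i + 1)) - f (R.xe i)‖ := by
  rw [inscribedSum_eq_range, Finset.sum_Ico_eq_sum_range]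
  apply Finset.sum_congr rfl
  intro i hi
  rw [Finset.mem_range] at hi
  have hn : (R.sub j k hjk hk hc hd).n = k - j := rfl
  rw [hn] at hi
  rw [R.sub_xe j k hjk hk hc hd (by omega), R.sub_xe j k hjk hk hc hd (by omega)]
  rw [show j + (i + 1) = j + i + 1 by omega]

lemma inscribedSum_single {M : ℕ} (f : ℝ → EuclideanSpace ℝ (Fin M)) {u v : ℝ} (h : u < v) :
    inscribedSum f (IntervalPartition.single h) = ‖f v - f u‖ := by
  unfold inscribedSum IntervalPartition.single
  simp [Fin.sum_univ_one]

lemma clen_split {M : ℕ} (f : ℝ → EuclideanSpace ℝ (Fin M)) {u v w : ℝ}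
    (huv : u ≤ v) (hvw : v ≤ w) :
    curveLength f u w ≤ curveLength f u v + curveLength f v w := by
  apply iSup_le
  intro R
  classical
  set g : ℕ → ℝ := fun i => ‖f (R.xe (i + 1)) - f (R.xe i)‖ with hg
  set jn := Nat.findGreatest (fun j => R.xe j ≤ v) R.n with hjn
  have hj0 : R.xe jn ≤ v := by
    apply Nat.findGreatest_spec (P := fun j => R.xe j ≤ v) (Nat.zero_le R.n)
    rw [R.xe_zero]
    exact huv
  have hjle : jn ≤ R.n := Nat.findGreatest_le R.n
  have hmax : ∀ m, jn < m → m ≤ R.n → v < R.xe m := fun m h1 h2 =>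
    lt_of_not_ge (Nat.findGreatest_is_greatest h1 h2)
  rcases eq_or_lt_of_le hj0 with hA | hB
  · -- R.xe jn = v : exact split
    set P1 := R.sub 0 jn (Nat.zero_le _) hjle R.xe_zero hA with hP1
    set P2 := R.sub jn R.n hjle le_rfl hA R.xe_n with hP2
    have hsum : inscribedSum f R = inscribedSum f P1 + inscribedSum f P2 := by
      rw [hP1, hP2, inscribedSum_sub, inscribedSum_sub, inscribedSum_eq_range,
        Finset.range_eq_Ico, ← Finset.sum_Ico_consecutive _ (Nat.zero_le jn) hjle]
    calc ENNReal.ofReal (inscribedSum f R)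
        = ENNReal.ofReal (inscribedSum f P1) + ENNReal.ofReal (inscribedSum f P2) := by
          rw [hsum, ENNReal.ofReal_add (inscribedSum_nonneg f P1) (inscribedSum_nonneg f P2)]
      _ ≤ curveLength f u v + curveLength f v w :=
          add_le_add (ofReal_inscribedSum_le f P1) (ofReal_inscribedSum_le f P2)
  · -- R.xe jn < v
    have hjlt : jn < R.n := by
      rcases eq_or_lt_of_le hjle with he | h
      · exfalso
        rw [he, R.xe_n] at hB
        linarith
      · exact h
    have hnext : v < R.xe (jn + 1) := hmax (jn + 1) (Nat.lt_succ_self _) (by omega)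
    set P1 := (R.sub 0 jn (Nat.zero_le _) (by omega) R.xe_zero rfl).concat
      (IntervalPartition.single hB) with hP1
    set P2 := (IntervalPartition.single hnext).concat
      (R.sub (jn + 1) R.n (by omega) le_rfl rfl R.xe_n) with hP2
    have hsum : inscribedSum f R ≤ inscribedSum f P1 + inscribedSum f P2 := by
      rw [hP1, hP2, inscribedSum_concat, inscribedSum_concat, inscribedSum_sub,
        inscribedSum_sub, inscribedSum_single, inscribedSum_single, inscribedSum_eq_range,
        Finset.range_eq_Ico, ← Finset.sum_Ico_consecutive _ (Nat.zero_le jn) (le_of_lt hjlt),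
        ← Finset.sum_Ico_consecutive _ (show jn ≤ jn + 1 by omega) (show jn + 1 ≤ R.n by omega),
        Finset.sum_Ico_eq_sum_range]
      rw [show Finset.Ico jn (jn + 1) = {jn} from Nat.Ico_succ_singleton jn, Finset.sum_singleton]
      have htri : ‖f (R.xe (jn + 1)) - f (R.xe jn)‖ ≤
          ‖f v - f (R.xe jn)‖ + ‖f (R.xe (jn + 1)) - f v‖ := by
        have := norm_sub_le_norm_sub_add_norm_sub (f (R.xe (jn + 1))) (f v) (f (R.xe jn))
        linarith
      linarith [htri]
    calc ENNReal.ofReal (inscribedSum f R)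
        ≤ ENNReal.ofReal (inscribedSum f P1) + ENNReal.ofReal (inscribedSum f P2) := by
          rw [← ENNReal.ofReal_add (inscribedSum_nonneg f P1) (inscribedSum_nonneg f P2)]
          exact ENNReal.ofReal_le_ofReal hsum
      _ ≤ curveLength f u v + curveLength f v w :=
          add_le_add (ofReal_inscribedSum_le f P1) (ofReal_inscribedSum_le f P2)

lemma abs_apply_le_norm' {M : ℕ} (x : EuclideanSpace ℝ (Fin M)) (m : Fin M) : |x m| ≤ ‖x‖ := by
  rw [EuclideanSpace.norm_eq]
  simp only [Real.norm_eq_abs, sq_abs]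
  rw [← Real.sqrt_sq_eq_abs]
  apply Real.sqrt_le_sqrt
  exact Finset.single_le_sum (fun i _ => sq_nonneg (x i)) (Finset.mem_univ m)

lemma norm_le_sum_abs' {M : ℕ} (x : EuclideanSpace ℝ (Fin M)) : ‖x‖ ≤ ∑ m, |x m| := by
  rw [EuclideanSpace.norm_eq]
  simp only [Real.norm_eq_abs, sq_abs]
  have h : ∑ i, x i ^ 2 ≤ (∑ i, |x i|) ^ 2 := by
    calc ∑ i, x i ^ 2 = ∑ i, |x i| ^ 2 := by simp [sq_abs]
    _ ≤ (∑ i, |x i|) ^ 2 := Finset.sum_sq_le_sq_sum_of_nonneg (fun i _ => abs_nonneg _)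
  calc Real.sqrt (∑ i, x i ^ 2) ≤ Real.sqrt ((∑ i, |x i|) ^ 2) := Real.sqrt_le_sqrt h
  _ = ∑ i, |x i| := Real.sqrt_sq (Finset.sum_nonneg fun i _ => abs_nonneg _)

section ArcLemmas

variable {M : ℕ} (f : ℝ → EuclideanSpace ℝ (Fin M)) {a b : ℝ}

lemma clen_ne_top (hrect : curveLength f a b ≠ ⊤) {x y : ℝ} (hax : a ≤ x) (hxy : x ≤ y)
    (hyb : y ≤ b) : curveLength f x y ≠ ⊤ :=
  ne_top_of_le_ne_top hrect
    (le_trans (clen_mono_right f hax hxy) (clen_mono_left f (le_trans hax hxy) hyb))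

lemma arc_mono (hrect : curveLength f a b ≠ ⊤) {x y : ℝ} (hax : a ≤ x) (hxy : x ≤ y)
    (hyb : y ≤ b) : (curveLength f a x).toReal ≤ (curveLength f a y).toReal :=
  ENNReal.toReal_mono (clen_ne_top f hrect le_rfl (le_trans hax hxy) hyb)
    (clen_mono_left f hax hxy)

lemma arc_diff_le (hrect : curveLength f a b ≠ ⊤) {x y : ℝ} (hax : a ≤ x) (hxy : x ≤ y)
    (hyb : y ≤ b) :
    (curveLength f a y).toReal - (curveLength f a x).toReal ≤ (curveLength f x y).toReal := by
  have hax' : curveLength f a x ≠ ⊤ := clen_ne_top f hrect le_rfl hax (le_trans hxy hyb)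
  have hxy' : curveLength f x y ≠ ⊤ := clen_ne_top f hrect hax hxy hyb
  have h := clen_split f hax hxy
  have h2 : (curveLength f a y).toReal ≤
      (curveLength f a x).toReal + (curveLength f x y).toReal := by
    have := ENNReal.toReal_mono (a := curveLength f a y)
      (by exact ENNReal.add_ne_top.2 ⟨hax', hxy'⟩) h
    rwa [ENNReal.toReal_add hax' hxy'] at this
  linarith

lemma norm_le_arc_diff (hrect : curveLength f a b ≠ ⊤) {x y : ℝ} (hax : a ≤ x) (hxy : x ≤ y)
    (hyb : y ≤ b) :
    ‖f y - f x‖ ≤ (curveLength f a y).toReal - (curveLength f a x).toReal := by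
  have hax' : curveLength f a x ≠ ⊤ := clen_ne_top f hrect le_rfl hax (le_trans hxy hyb)
  have hay' : curveLength f a y ≠ ⊤ := clen_ne_top f hrect le_rfl (le_trans hax hxy) hyb
  have h1 : curveLength f a x + ENNReal.ofReal ‖f y - f x‖ ≤ curveLength f a y :=
    le_trans (add_le_add_right (ofReal_norm_le_clen f hxy) _) (clen_concat f hax hxy)
  have h2 := ENNReal.toReal_mono hay' h1
  rw [ENNReal.toReal_add hax' ENNReal.ofReal_ne_top,
    ENNReal.toReal_ofReal (norm_nonneg _)] at h2
  linarith

end ArcLemmas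

lemma IntervalPartition.x_mem {a b : ℝ} (P : IntervalPartition a b) (l : Fin (P.n + 1)) :
    a ≤ P.x l ∧ P.x l ≤ b := by
  have h := P.xe_mem l
  rw [P.xe_of_le (by omega)] at h
  simpa [Fin.eta] using h


set_option maxHeartbeats 1000000 in
/-- For a continuous rectifiable curve `C ↔ f : [a,b] → ℝ^M` with arc length
function `s(x) = ℓ(f on [a,x])`, `s` is absolutely continuous on `[a,b]` iff every
component of `f` is absolutely continuous on `[a,b]`. -/
theorem arcLength_absCont_iff_components_absCont {M : ℕ} (a b : ℝ) (hab : a < b)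
    (f : ℝ → EuclideanSpace ℝ (Fin M))
    (hcont : ContinuousOn f (Set.Icc a b)) (hrect : curveLength f a b < ⊤) :
    AbsContOn (fun x => (curveLength f a x).toReal) a b ↔
      ∀ m : Fin M, AbsContOn (fun t => f t m) a b := by
  have hne : curveLength f a b ≠ ⊤ := hrect.ne
  constructor
  · intro hs m ε hε
    obtain ⟨δ, hδ, H⟩ := hs ε hε
    refine ⟨δ, hδ, fun n u v hmem hdisj hlen => ?_⟩
    refine lt_of_le_of_lt (Finset.sum_le_sum fun i _ => ?_) (H n u v hmem hdisj hlen)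
    obtain ⟨h1, h2, h3⟩ := hmem i
    have hkey : ‖f (v i) - f (u i)‖ ≤
        (curveLength f a (v i)).toReal - (curveLength f a (u i)).toReal :=
      norm_le_arc_diff f hne h1 h2 h3
    have hcomp : |f (v i) m - f (u i) m| ≤ ‖f (v i) - f (u i)‖ := by
      have h := abs_apply_le_norm' (f (v i) - f (u i)) m
      simpa using h
    calc |f (v i) m - f (u i) m| ≤ ‖f (v i) - f (u i)‖ := hcomp
      _ ≤ (curveLength f a (v i)).toReal - (curveLength f a (u i)).toReal := hkey
      _ ≤ |(curveLength f a (v i)).toReal - (curveLength f a (u i)).toReal| := le_abs_self _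
  · intro hc
    rcases Nat.eq_zero_or_pos M with hM0 | hM
    · subst hM0
      have hz : ∀ x y : ℝ, curveLength f x y = 0 := fun x y => by
        apply le_antisymm _ zero_le
        apply iSup_le
        intro Q
        have hzz : inscribedSum f Q = 0 := Finset.sum_eq_zero fun i _ => by
          have h0 : (f (Q.x i.succ) - f (Q.x i.castSucc)) = 0 := Subsingleton.elim _ _
          rw [h0, norm_zero]
        simp [hzz]
      intro ε hε
      refine ⟨1, one_pos, fun n u v _ _ _ => ?_⟩
      have hzt : ∀ x : ℝ, (curveLength f a x).toReal = 0 := fun x => by rw [hz]; simp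
      simpa [hzt] using hε
    · intro ε hε
      set ε' := ε / (2 * (M + 1)) with hε'def
      have hε' : 0 < ε' := by positivity
      choose δm hδm hACm using fun m : Fin M => hc m ε' hε'
      haveI : Nonempty (Fin M) := ⟨⟨0, hM⟩⟩
      have hu : (Finset.univ : Finset (Fin M)).Nonempty := Finset.univ_nonempty
      set δ := Finset.univ.inf' hu δm with hδdef
      have hδ : 0 < δ := (Finset.lt_inf'_iff hu).2 fun m _ => hδm m
      refine ⟨δ, hδ, fun n u v hmem hdisj hlen => ?_⟩
      have hex : ∀ i : Fin n, ∃ Q : IntervalPartition (u i) (v i),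
          (curveLength f (u i) (v i)).toReal < inscribedSum f Q + ε / (2 * (n + 1)) := by
        intro i
        obtain ⟨h1, h2, h3⟩ := hmem i
        have hnonempty := partition_nonempty h2
        set r := (curveLength f (u i) (v i)).toReal with hr
        set η := ε / (2 * (n + 1)) with hη
        have hηpos : 0 < η := by positivity
        rcases lt_or_ge r η with h | h
        · obtain ⟨Q⟩ := hnonempty
          exact ⟨Q, lt_of_lt_of_le h (le_add_of_nonneg_left (inscribedSum_nonneg f Q))⟩
        · have hfin : curveLength f (u i) (v i) ≠ ⊤ := clen_ne_top f hne h1 h2 h3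
          have hlt : ENNReal.ofReal (r - η) < curveLength f (u i) (v i) := by
            conv_rhs => rw [← ENNReal.ofReal_toReal hfin]
            rw [ENNReal.ofReal_lt_ofReal_iff_of_nonneg (by linarith)]
            linarith
          rw [curveLength, lt_iSup_iff] at hlt
          obtain ⟨Q, hQ⟩ := hlt
          refine ⟨Q, ?_⟩
          rw [ENNReal.ofReal_lt_ofReal_iff_of_nonneg (by linarith)] at hQ
          linarith
      choose P hP using hex
      classical
      set e : Fin (Fintype.card ((i : Fin n) × Fin (P i).n)) ≃ ((i : Fin n) × Fin (P i).n) :=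
        (Fintype.equivFin ((i : Fin n) × Fin (P i).n)).symm with hedef
      set U : (Fin (Fintype.card ((i : Fin n) × Fin (P i).n))) → ℝ :=
        fun k => (P (e k).1).x (e k).2.castSucc with hUdef
      set V : (Fin (Fintype.card ((i : Fin n) × Fin (P i).n))) → ℝ :=
        fun k => (P (e k).1).x (e k).2.succ with hVdef
      have hUVmem : ∀ k, a ≤ U k ∧ U k ≤ V k ∧ V k ≤ b := fun k => by
        obtain ⟨h1, h2, h3⟩ := hmem (e k).1
        have hu' := ((P (e k).1).x_mem (e k).2.castSucc)
        have hv' := ((P (e k).1).x_mem (e k).2.succ)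
        exact ⟨le_trans h1 hu'.1,
          le_of_lt ((P (e k).1).mono Fin.castSucc_lt_succ), le_trans hv'.2 h3⟩
      have hUVdisj : ∀ k k', k ≠ k' →
          Set.Ioo (U k) (V k) ∩ Set.Ioo (U k') (V k') = ∅ := by
        intro k k' hkk'
        have hee : e k ≠ e k' := fun h => hkk' (e.injective h)
        by_cases hii : (e k).1 = (e k').1
        · -- same curve interval, different partition segments
          apply Set.eq_empty_iff_forall_notMem.2
          rintro t ⟨⟨ht1, ht2⟩, ⟨ht3, ht4⟩⟩
          simp only [hUdef, hVdef] at ht1 ht2 ht3 ht4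
          rcases hek : e k with ⟨i, j⟩
          rcases hek' : e k' with ⟨i', j'⟩
          rw [hek] at ht1 ht2 hii hee
          rw [hek'] at ht3 ht4 hii hee
          dsimp only at ht1 ht2 ht3 ht4 hii
          subst hii
          have hjj : j ≠ j' := by
            intro h
            exact hee (by rw [h])
          rcases lt_or_gt_of_ne hjj with h | h
          · have : (P i).x j.succ ≤ (P i).x j'.castSucc :=
              (P i).mono.monotone (Fin.succ_le_castSucc_iff.2 h)
            linarith
          · have : (P i).x j'.succ ≤ (P i).x j.castSucc :=
              (P i).mono.monotone (Fin.succ_le_castSucc_iff.2 h)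
            linarith
        · have hsub1 : Set.Ioo (U k) (V k) ⊆ Set.Ioo (u (e k).1) (v (e k).1) :=
            Set.Ioo_subset_Ioo ((P (e k).1).x_mem _).1 ((P (e k).1).x_mem _).2
          have hsub2 : Set.Ioo (U k') (V k') ⊆ Set.Ioo (u (e k').1) (v (e k').1) :=
            Set.Ioo_subset_Ioo ((P (e k').1).x_mem _).1 ((P (e k').1).x_mem _).2
          have hd := hdisj (e k).1 (e k').1 hii
          apply Set.eq_empty_of_subset_empty
          rw [← hd]
          exact Set.inter_subset_inter hsub1 hsub2
      have htotal : ∑ k, (V k - U k) = ∑ i, (v i - u i) := by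
        rw [Fintype.sum_equiv e (fun k => V k - U k)
          (fun p => (P p.1).x p.2.succ - (P p.1).x p.2.castSucc) (fun k => rfl)]
        rw [show (∑ p : (i : Fin n) × Fin (P i).n,
            ((P p.1).x p.2.succ - (P p.1).x p.2.castSucc)) =
            ∑ i : Fin n, ∑ j : Fin (P i).n, ((P i).x j.succ - (P i).x j.castSucc) from
          (Finset.sum_sigma _ _ _)]
        exact Finset.sum_congr rfl fun i _ => partition_telescope (P i)
      have hlen' : ∀ m : Fin M, ∑ k, |f (V k) m - f (U k) m| < ε' := fun m =>
        hACm m _ U V hUVmem hUVdisj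
          (by rw [htotal]; exact lt_of_lt_of_le hlen (Finset.inf'_le _ (Finset.mem_univ m)))
      have hsum_eq : ∑ i, inscribedSum f (P i) = ∑ k, ‖f (V k) - f (U k)‖ := by
        rw [Fintype.sum_equiv e (fun k => ‖f (V k) - f (U k)‖)
          (fun p => ‖f ((P p.1).x p.2.succ) - f ((P p.1).x p.2.castSucc)‖) (fun k => rfl)]
        rw [show (∑ p : (i : Fin n) × Fin (P i).n,
            ‖f ((P p.1).x p.2.succ) - f ((P p.1).x p.2.castSucc)‖) =
            ∑ i : Fin n, ∑ j : Fin (P i).n, ‖f ((P i).x j.succ) - f ((P i).x j.castSucc)‖ from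
          (Finset.sum_sigma _ _ _)]
        rfl
      have hbound : ∑ i, inscribedSum f (P i) ≤
          ∑ m : Fin M, ∑ k, |f (V k) m - f (U k) m| := by
        rw [hsum_eq]
        calc ∑ k, ‖f (V k) - f (U k)‖
            ≤ ∑ k, ∑ m : Fin M, |f (V k) m - f (U k) m| := Finset.sum_le_sum fun k _ => by
              have h := norm_le_sum_abs' (f (V k) - f (U k))
              simpa using h
          _ = ∑ m : Fin M, ∑ k, |f (V k) m - f (U k) m| := Finset.sum_comm
      have hM' : ∑ m : Fin M, ∑ k, |f (V k) m - f (U k) m| < M * ε' := by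
        have h := Finset.sum_lt_sum_of_nonempty hu (fun m _ => hlen' m)
        simpa [Finset.sum_const, Finset.card_univ, nsmul_eq_mul] using h
      have hMε : (M : ℝ) * ε' ≤ ε / 2 := by
        rw [hε'def, mul_div_assoc']
        rw [div_le_div_iff₀ (by positivity) two_pos]
        nlinarith [hε.le]
      have hnη : (n : ℝ) * (ε / (2 * (n + 1))) ≤ ε / 2 := by
        rw [mul_div_assoc']
        rw [div_le_div_iff₀ (by positivity) two_pos]
        nlinarith [hε.le]
      have hstep1 : ∑ i, |(curveLength f a (v i)).toReal - (curveLength f a (u i)).toReal| =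
          ∑ i, ((curveLength f a (v i)).toReal - (curveLength f a (u i)).toReal) :=
        Finset.sum_congr rfl fun i _ => abs_of_nonneg (by
          have h := arc_mono f hne (hmem i).1 (hmem i).2.1 (hmem i).2.2
          linarith)
      have hstep2 : ∑ i, ((curveLength f a (v i)).toReal - (curveLength f a (u i)).toReal) ≤
          ∑ i, (curveLength f (u i) (v i)).toReal :=
        Finset.sum_le_sum fun i _ => arc_diff_le f hne (hmem i).1 (hmem i).2.1 (hmem i).2.2
      have hstep3 : ∑ i, (curveLength f (u i) (v i)).toReal ≤
          ∑ i, inscribedSum f (P i) + (n : ℝ) * (ε / (2 * (n + 1))) := by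
        have h := Finset.sum_le_sum (s := Finset.univ) fun i (_ : i ∈ Finset.univ) => (hP i).le
        rw [Finset.sum_add_distrib, Finset.sum_const, Finset.card_univ, Fintype.card_fin,
          nsmul_eq_mul] at h
        exact h
      calc ∑ i, |(curveLength f a (v i)).toReal - (curveLength f a (u i)).toReal|
          = ∑ i, ((curveLength f a (v i)).toReal - (curveLength f a (u i)).toReal) := hstep1
        _ ≤ ∑ i, (curveLength f (u i) (v i)).toReal := hstep2
        _ ≤ ∑ i, inscribedSum f (P i) + (n : ℝ) * (ε / (2 * (n + 1))) := hstep3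
        _ < M * ε' + ε / 2 := by
            have := lt_of_le_of_lt hbound hM'
            linarith
        _ ≤ ε / 2 + ε / 2 := by linarith
        _ = ε := by ring


end
end

section
/- Let C ↔ f : [a,b] → ℝ^M (a < b) be a continuous and rectifiable curve. Then the derivative f′(x) exists for (Lebesgue) almost every x ∈ [a,b], the function x ↦ ‖f′(x)‖ is Lebesgue integrable on [a,b], and ℓ(C) ≥ ∫_a^b ‖f′(x)‖ dx. -/
open scoped BigOperators ENNReal
open MeasureTheory Filter

noncomputable section

open scoped Topology

lemma chain_edist {E : Type*} [PseudoEMetricSpace E] (g : ℕ → E) :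
    ∀ q p, p ≤ q → edist (g p) (g q) ≤ ∑ j ∈ Finset.Ico p q, edist (g j) (g (j + 1)) := by
  intro q
  induction q with
  | zero =>
    intro p hp
    interval_cases p
    simp
  | succ q ih =>
    intro p hp
    rcases Nat.lt_succ_iff_lt_or_eq.mp (Nat.lt_succ_of_le hp) with h | h
    · have hpq : p ≤ q := Nat.lt_succ_iff.mp h
      calc edist (g p) (g (q + 1)) ≤ edist (g p) (g q) + edist (g q) (g (q + 1)) :=
            edist_triangle _ _ _
        _ ≤ (∑ j ∈ Finset.Ico p q, edist (g j) (g (j + 1))) + edist (g q) (g (q + 1)) := by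
            gcongr; exact ih p hpq
        _ = ∑ j ∈ Finset.Ico p (q + 1), edist (g j) (g (j + 1)) := by
            rw [Finset.sum_Ico_succ_top hpq]
    · subst h; simp

lemma evar_le_curveLength {M : ℕ} (f : ℝ → EuclideanSpace ℝ (Fin M)) {a b : ℝ} (hab : a ≤ b) :
    eVariationOn f (Set.Icc a b) ≤ curveLength f a b := by
  rw [eVariationOn]
  apply iSup_le
  rintro ⟨n, u, hu, us⟩
  dsimp only
  set T : Finset ℝ := insert a (insert b ((Finset.range (n + 1)).image u)) with hT
  have hTmem : ∀ t ∈ T, t ∈ Set.Icc a b := by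
    intro t ht
    simp only [hT, Finset.mem_insert, Finset.mem_image, Finset.mem_range] at ht
    rcases ht with rfl | rfl | ⟨i, _, rfl⟩
    · exact ⟨le_rfl, hab⟩
    · exact ⟨hab, le_rfl⟩
    · exact us i
  have haT : a ∈ T := by simp [hT]
  have hbT : b ∈ T := by simp [hT]
  have hne : T.Nonempty := ⟨a, haT⟩
  obtain ⟨m, hm⟩ : ∃ m, T.card = m + 1 := ⟨T.card - 1, (Nat.succ_pred_eq_of_pos hne.card_pos).symm⟩
  set e := T.orderIsoOfFin hm with he
  set X : Fin (m + 1) → ℝ := fun i => (e i : ℝ) with hX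
  have hXmono : StrictMono X := fun i j h => by exact_mod_cast e.strictMono h
  have hXmem : ∀ i, X i ∈ T := fun i => (e i).2
  have hXsurj : ∀ t, (ht : t ∈ T) → X (e.symm ⟨t, ht⟩) = t := by
    intro t ht; simp [hX]
  have hX0 : X 0 = a := by
    refine le_antisymm ?_ (hTmem _ (hXmem 0)).1
    rw [← hXsurj a haT]
    exact hXmono.monotone (Fin.zero_le _)
  have hXlast : X (Fin.last m) = b := by
    refine le_antisymm (hTmem _ (hXmem _)).2 ?_
    rw [← hXsurj b hbT]
    exact hXmono.monotone (Fin.le_last _)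
  set P : IntervalPartition a b := ⟨m, X, hXmono, hX0, hXlast⟩ with hP
  set Y : ℕ → ℝ := fun j => X ⟨min j m, by omega⟩ with hY
  have huT : ∀ i, u (min i n) ∈ T := by
    intro i
    simp only [hT, Finset.mem_insert, Finset.mem_image, Finset.mem_range]
    exact Or.inr (Or.inr ⟨min i n, by omega, rfl⟩)
  set k : ℕ → ℕ := fun i => ((e.symm ⟨u (min i n), huT i⟩ : Fin (m + 1)) : ℕ) with hk
  have hk_le : ∀ i, k i ≤ m := fun i => Nat.lt_succ_iff.mp (Fin.is_lt _)
  have hkmono : Monotone k := by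
    intro i j hij
    have h1 : u (min i n) ≤ u (min j n) := hu (min_le_min hij le_rfl)
    have : (⟨u (min i n), huT i⟩ : T) ≤ ⟨u (min j n), huT j⟩ := h1
    exact e.symm.monotone this
  have hYk : ∀ i, i ≤ n → Y (k i) = u i := by
    intro i hi
    have h1 : (⟨min (k i) m, by omega⟩ : Fin (m + 1)) = e.symm ⟨u (min i n), huT i⟩ := by
      apply Fin.ext
      simp [hk, min_eq_left (hk_le i)]
      exact hk_le i
    rw [hY]
    dsimp only
    rw [h1, hXsurj, min_eq_left hi]
  calc ∑ i ∈ Finset.range n, edist (f (u (i + 1))) (f (u i))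
      = ∑ i ∈ Finset.range n, edist (f (Y (k i))) (f (Y (k (i + 1)))) := by
        refine Finset.sum_congr rfl fun i hi => ?_
        rw [Finset.mem_range] at hi
        rw [hYk i (by omega), hYk (i + 1) (by omega), edist_comm]
    _ ≤ ∑ i ∈ Finset.range n, ∑ j ∈ Finset.Ico (k i) (k (i + 1)),
          edist (f (Y j)) (f (Y (j + 1))) := by
        refine Finset.sum_le_sum fun i _ => ?_
        exact chain_edist (fun j => f (Y j)) _ _ (hkmono (by omega))
    _ = ∑ j ∈ (Finset.range n).biUnion (fun i => Finset.Ico (k i) (k (i + 1))),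
          edist (f (Y j)) (f (Y (j + 1))) := by
        refine (Finset.sum_biUnion ?_).symm
        intro i1 h1 i2 h2 hne12
        rcases lt_or_gt_of_ne hne12 with h | h
        · refine Finset.disjoint_left.mpr fun j hj1 hj2 => ?_
          rw [Finset.mem_Ico] at hj1 hj2
          have : k (i1 + 1) ≤ k i2 := hkmono (by omega)
          omega
        · refine Finset.disjoint_left.mpr fun j hj1 hj2 => ?_
          rw [Finset.mem_Ico] at hj1 hj2
          have : k (i2 + 1) ≤ k i1 := hkmono (by omega)
          omega
    _ ≤ ∑ j ∈ Finset.range m, edist (f (Y j)) (f (Y (j + 1))) := by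
        refine Finset.sum_le_sum_of_subset fun j hj => ?_
        simp only [Finset.mem_biUnion, Finset.mem_Ico, Finset.mem_range] at hj ⊢
        obtain ⟨i, _, _, hji⟩ := hj
        exact lt_of_lt_of_le hji (hk_le _)
    _ = ENNReal.ofReal (inscribedSum f P) := by
        rw [inscribedSum, ENNReal.ofReal_sum_of_nonneg (fun i _ => norm_nonneg _)]
        rw [← Fin.sum_univ_eq_sum_range (fun j => edist (f (Y j)) (f (Y (j + 1)))) m]
        refine Finset.sum_congr rfl fun i _ => ?_
        have h1 : Y (i : ℕ) = X i.castSucc := by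
          show X ⟨min (i : ℕ) m, by omega⟩ = X i.castSucc
          congr 1; apply Fin.ext; simp [min_eq_left i.is_lt.le]
        have h2 : Y ((i : ℕ) + 1) = X i.succ := by
          show X ⟨min ((i : ℕ) + 1) m, by omega⟩ = X i.succ
          congr 1; apply Fin.ext; simp [Nat.succ_le_of_lt i.is_lt]
        rw [h1, h2, edist_dist, dist_eq_norm, norm_sub_rev]
    _ ≤ curveLength f a b := le_iSup (fun P : IntervalPartition a b => ENNReal.ofReal (inscribedSum f P)) P


/-- For a continuous rectifiable curve `C ↔ f : [a,b] → ℝ^M`, `f′(x)` exists for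
Lebesgue-a.e. `x ∈ [a,b]`, `x ↦ ‖f′(x)‖` is Lebesgue integrable on `[a,b]`, and
`ℓ(C) ≥ ∫_a^b ‖f′(x)‖ dx`. -/
theorem integral_norm_deriv_le_length {M : ℕ} (a b : ℝ) (hab : a < b)
    (f : ℝ → EuclideanSpace ℝ (Fin M))
    (hcont : ContinuousOn f (Set.Icc a b)) (hrect : curveLength f a b < ⊤) :
    (∀ᵐ x ∂(volume : Measure ℝ), x ∈ Set.Icc a b → DifferentiableAt ℝ f x) ∧
    IntegrableOn (fun x => ‖deriv f x‖) (Set.Icc a b) volume ∧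
    ∫ x in Set.Icc a b, ‖deriv f x‖ ≤ (curveLength f a b).toReal := by
  have hE : eVariationOn f (Set.Icc a b) ≠ ⊤ :=
    ((evar_le_curveLength f hab.le).trans_lt hrect).ne
  have hbv : BoundedVariationOn f (Set.Icc a b) := hE
  have hlbv : LocallyBoundedVariationOn f (Set.Icc a b) := hbv.locallyBoundedVariationOn
  -- the clamped variation function
  set c : ℝ → ℝ := fun x => max a (min x b) with hc
  set V : ℝ → ℝ := fun x => (eVariationOn f (Set.Icc a (c x))).toReal with hV
  have hcx : ∀ x, a ≤ x → x ≤ b → c x = x := by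
    intro x h1 h2; simp [hc, min_eq_left h2, max_eq_right h1]
  have hcmem : ∀ x, a ≤ c x ∧ c x ≤ b := by
    intro x; constructor
    · exact le_max_left _ _
    · exact max_le hab.le (min_le_right _ _)
  have hsub : ∀ x, Set.Icc a (c x) ⊆ Set.Icc a b :=
    fun x => Set.Icc_subset_Icc le_rfl (hcmem x).2
  have hfin : ∀ x, eVariationOn f (Set.Icc a (c x)) ≠ ⊤ :=
    fun x => ((eVariationOn.mono f (hsub x)).trans_lt hE.lt_top).ne
  have hVmono : Monotone V := by
    intro x y hxy
    refine ENNReal.toReal_mono (hfin y) (eVariationOn.mono f (Set.Icc_subset_Icc le_rfl ?_))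
    exact max_le_max le_rfl (min_le_min hxy le_rfl)
  have hVnonneg : ∀ x, 0 ≤ V x := fun x => ENNReal.toReal_nonneg
  -- key variation inequality
  have hkey : ∀ x y, a ≤ x → x ≤ y → y ≤ b → ‖f y - f x‖ ≤ V y - V x := by
    intro x y hax hxy hyb
    have hfinxy : eVariationOn f (Set.Icc x y) ≠ ⊤ :=
      ((eVariationOn.mono f (Set.Icc_subset_Icc hax hyb)).trans_lt hE.lt_top).ne
    have hadd := eVariationOn.Icc_add_Icc f (s := Set.univ) hax hxy (Set.mem_univ x)
    simp only [Set.univ_inter] at hadd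
    have hVy : V y = (eVariationOn f (Set.Icc a y)).toReal := by
      rw [hV]; simp only [hcx y (hax.trans hxy) hyb]
    have hVx : V x = (eVariationOn f (Set.Icc a x)).toReal := by
      rw [hV]; simp only [hcx x hax (hxy.trans hyb)]
    have hfinax : eVariationOn f (Set.Icc a x) ≠ ⊤ :=
      ((eVariationOn.mono f (Set.Icc_subset_Icc le_rfl (hxy.trans hyb))).trans_lt hE.lt_top).ne
    have h2 : V y - V x = (eVariationOn f (Set.Icc x y)).toReal := by
      rw [hVy, hVx, ← hadd, ENNReal.toReal_add hfinax hfinxy]; ring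
    rw [h2, ← dist_eq_norm, dist_edist]
    refine ENNReal.toReal_mono hfinxy ?_
    rw [edist_comm]
    exact eVariationOn.edist_le f (Set.mem_Icc.mpr ⟨le_rfl, hxy⟩) (Set.mem_Icc.mpr ⟨hxy, le_rfl⟩)
  -- Stieltjes measure of V
  set G := hVmono.stieltjesFunction with hG
  set μ := G.measure with hμ
  set g : ℝ → ℝ := fun x => (μ.rnDeriv volume x).toReal with hg
  have hder : ∀ᵐ x ∂(volume : Measure ℝ), HasDerivAt V (g x) x := hVmono.ae_hasDerivAt
  have hdiff : ∀ᵐ x ∂(volume : Measure ℝ), x ∈ Set.Icc a b →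
      DifferentiableWithinAt ℝ f (Set.Icc a b) x :=
    hlbv.ae_differentiableWithinAt_of_mem
  have hab_ae : ∀ᵐ x ∂(volume : Measure ℝ), x ∉ ({a, b} : Set ℝ) :=
    measure_eq_zero_iff_ae_notMem.mp (Set.Countable.measure_zero (Set.to_countable _) volume)
  -- first conjunct
  have goal1 : ∀ᵐ x ∂(volume : Measure ℝ), x ∈ Set.Icc a b → DifferentiableAt ℝ f x := by
    filter_upwards [hdiff, hab_ae] with x h1 h2 hx
    have hxo : x ∈ Set.Ioo a b := by
      rcases hx with ⟨h3, h4⟩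
      simp only [Set.mem_insert_iff, Set.mem_singleton_iff, not_or] at h2
      exact ⟨lt_of_le_of_ne h3 (Ne.symm h2.1), lt_of_le_of_ne h4 h2.2⟩
    exact (h1 hx).differentiableAt (Icc_mem_nhds hxo.1 hxo.2)
  -- a.e. bound
  have hbound : ∀ᵐ x ∂(volume : Measure ℝ), x ∈ Set.Icc a b → ‖deriv f x‖ ≤ g x := by
    filter_upwards [goal1, hder, hab_ae] with x h1 h2 h3 hx
    have hxo : x ∈ Set.Ioo a b := by
      rcases hx with ⟨h4, h5⟩
      simp only [Set.mem_insert_iff, Set.mem_singleton_iff, not_or] at h3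
      exact ⟨lt_of_le_of_ne h4 (Ne.symm h3.1), lt_of_le_of_ne h5 h3.2⟩
    have hf' : HasDerivAt f (deriv f x) x := (h1 hx).hasDerivAt
    have T1 : Tendsto (fun y => ‖slope f x y‖) (𝓝[>] x) (𝓝 ‖deriv f x‖) := by
      have := (hasDerivAt_iff_tendsto_slope.mp hf').mono_left
        (nhdsWithin_mono x (fun y (hy : y ∈ Set.Ioi x) => ne_of_gt hy))
      exact (continuous_norm.tendsto _).comp this
    have T2 : Tendsto (fun y => slope V x y) (𝓝[>] x) (𝓝 (g x)) :=
      (hasDerivAt_iff_tendsto_slope.mp h2).mono_left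
        (nhdsWithin_mono x (fun y (hy : y ∈ Set.Ioi x) => ne_of_gt hy))
    refine le_of_tendsto_of_tendsto T1 T2 ?_
    filter_upwards [Ioo_mem_nhdsGT_of_mem (Set.mem_Ico.mpr ⟨le_rfl, hxo.2⟩)] with y hy
    have hxy : x < y := hy.1
    have hyb : y ≤ b := hy.2.le
    have h6 : ‖f y - f x‖ ≤ V y - V x := hkey x y hxo.1.le hxy.le hyb
    rw [slope_def_module, slope_def_field, norm_smul, norm_inv, Real.norm_eq_abs,
      abs_of_pos (sub_pos.mpr hxy)]
    rw [div_eq_inv_mul]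
    have : (0:ℝ) ≤ (y - x)⁻¹ := inv_nonneg.mpr (sub_pos.mpr hxy).le
    exact mul_le_mul_of_nonneg_left h6 this
  have hμfin : μ (Set.Icc a b) ≠ ⊤ := by
    rw [hμ, G.measure_Icc]; exact ENNReal.ofReal_ne_top
  have hgmeas : Measurable g := (Measure.measurable_rnDeriv μ volume).ennreal_toReal
  have hlint : ∫⁻ x in Set.Icc a b, μ.rnDeriv volume x ∂volume ≠ ⊤ :=
    ((Measure.setLIntegral_rnDeriv_le (Set.Icc a b)).trans_lt hμfin.lt_top).ne
  have hgint : IntegrableOn g (Set.Icc a b) volume := by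
    refine integrable_toReal_of_lintegral_ne_top
      ((Measure.measurable_rnDeriv μ volume).aemeasurable) ?_
    exact hlint
  have hnormmeas : AEStronglyMeasurable (fun x => ‖deriv f x‖)
      (volume.restrict (Set.Icc a b)) :=
    ((stronglyMeasurable_deriv f).norm).aestronglyMeasurable
  have hbound' : ∀ᵐ x ∂(volume.restrict (Set.Icc a b)), ‖deriv f x‖ ≤ g x :=
    (ae_restrict_iff' measurableSet_Icc).mpr hbound
  have goal2 : IntegrableOn (fun x => ‖deriv f x‖) (Set.Icc a b) volume := by
    refine MeasureTheory.Integrable.mono hgint hnormmeas ?_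
    filter_upwards [hbound'] with x hx
    rw [norm_norm, Real.norm_eq_abs, abs_of_nonneg (ENNReal.toReal_nonneg)]
    exact hx
  refine ⟨goal1, goal2, ?_⟩
  have hsf : SigmaFinite μ := inferInstance
  have step1 : ∫ x in Set.Icc a b, ‖deriv f x‖ ≤ ∫ x in Set.Icc a b, g x :=
    integral_mono_ae goal2 hgint hbound'
  have step2 : ∫ x in Set.Icc a b, g x
      = (∫⁻ x in Set.Icc a b, μ.rnDeriv volume x ∂volume).toReal := by
    refine integral_toReal ((Measure.measurable_rnDeriv μ volume).aemeasurable) ?_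
    exact ae_restrict_of_ae (Measure.rnDeriv_lt_top μ volume)
  -- measure bound
  have hGb : G b = V b := by
    refine le_antisymm ?_ ?_
    · have h1 := hVmono.rightLim_le (lt_add_one b)
      have h2 : V (b + 1) = V b := by
        rw [hV]; simp only [hc]
        rw [min_eq_right (by linarith : b ≤ b + 1), min_eq_left le_rfl]
      rw [hVmono.stieltjesFunction_eq]
      rw [h2] at h1; exact h1
    · rw [hVmono.stieltjesFunction_eq]; exact hVmono.le_rightLim le_rfl
  have hleftLim : 0 ≤ Function.leftLim G a := by
    have h1 : G (a - 1) ≤ Function.leftLim G a := G.mono.le_leftLim (by linarith)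
    refine le_trans ?_ h1
    rw [hVmono.stieltjesFunction_eq]
    exact le_trans (hVnonneg (a - 1)) (hVmono.le_rightLim le_rfl)
  have step3 : μ (Set.Icc a b) ≤ ENNReal.ofReal (V b) := by
    rw [hμ, G.measure_Icc]
    exact ENNReal.ofReal_le_ofReal (by rw [hGb] at *; linarith)
  have hVb : V b = (eVariationOn f (Set.Icc a b)).toReal := by
    rw [hV]; simp only [hcx b hab.le le_rfl]
  calc ∫ x in Set.Icc a b, ‖deriv f x‖ ≤ ∫ x in Set.Icc a b, g x := step1
    _ = (∫⁻ x in Set.Icc a b, μ.rnDeriv volume x ∂volume).toReal := step2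
    _ ≤ (μ (Set.Icc a b)).toReal :=
        ENNReal.toReal_mono hμfin (Measure.setLIntegral_rnDeriv_le _)
    _ ≤ (ENNReal.ofReal (V b)).toReal := ENNReal.toReal_mono ENNReal.ofReal_ne_top step3
    _ = V b := ENNReal.toReal_ofReal (hVnonneg b)
    _ = (eVariationOn f (Set.Icc a b)).toReal := hVb
    _ ≤ (curveLength f a b).toReal :=
        ENNReal.toReal_mono hrect.ne (evar_le_curveLength f hab.le)


end
end

section
/- Let C ↔ f : [a,b] → ℝ^M (a < b) be a continuous curve. For x ∈ ℝ^M let N(f;x) denote the number (finite or +∞) of points t ∈ [a,b] with f(t) = x (so N(f;x) = 0 for x outside the graph [C]). Then ℓ(C) = ∫_{ℝ^M} N(f;x) dH¹(x), where H¹ is the 1-dimensional Hausdorff measure on ℝ^M. -/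
open scoped BigOperators ENNReal
open MeasureTheory Filter

noncomputable section

namespace BanachAux

variable {M : ℕ}

local notation "E" => EuclideanSpace ℝ (Fin M)

lemma edist_eq' (x y : E) : edist x y = ENNReal.ofReal ‖x - y‖ := by
  rw [edist_dist, dist_eq_norm]

lemma sum_eVar (f : ℝ → E) {g : ℕ → ℝ} (hg : Monotone g) (n : ℕ) :
    ∑ i ∈ Finset.range n, eVariationOn f (Set.Icc (g i) (g (i+1)))
      = eVariationOn f (Set.Icc (g 0) (g n)) := by
  induction n with
  | zero =>
      simp [eVariationOn.subsingleton f (Set.subsingleton_Icc_of_ge le_rfl)]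
  | succ n ih =>
      rw [Finset.sum_range_succ, ih]
      have h := eVariationOn.Icc_add_Icc f (s := Set.univ)
        (hg (Nat.zero_le n)) (hg (Nat.le_succ n)) (Set.mem_univ _)
      simpa using h

lemma Ico_subset_iUnion (g : ℕ → ℝ) (n : ℕ) :
    Set.Ico (g 0) (g n) ⊆ ⋃ i ∈ Finset.range n, Set.Ico (g i) (g (i+1)) := by
  induction n with
  | zero => simp
  | succ n ih =>
      intro y hy
      rcases lt_or_ge y (g n) with h | h
      · have := ih ⟨hy.1, h⟩
        simp only [Set.mem_iUnion, Finset.mem_range] at this ⊢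
        obtain ⟨i, hi, hyi⟩ := this
        exact ⟨i, Nat.lt_succ_of_lt hi, hyi⟩
      · simp only [Set.mem_iUnion, Finset.mem_range]
        exact ⟨n, Nat.lt_succ_self n, ⟨h, hy.2⟩⟩

/-- uniform grid -/
def grid (c d : ℝ) (n : ℕ) (i : ℕ) : ℝ := c + (min i n : ℕ) * ((d - c) / n)

lemma grid_zero (c d : ℝ) (n : ℕ) : grid c d n 0 = c := by simp [grid]

lemma grid_mono {c d : ℝ} (hcd : c ≤ d) (n : ℕ) : Monotone (grid c d n) := by
  intro i j hij
  have h1 : ((min i n : ℕ) : ℝ) ≤ ((min j n : ℕ) : ℝ) := by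
    exact_mod_cast min_le_min hij (le_refl n)
  have h2 : (0:ℝ) ≤ (d - c) / n := div_nonneg (by linarith) (Nat.cast_nonneg n)
  have := mul_le_mul_of_nonneg_right h1 h2
  simpa [grid] using this

lemma grid_eq_last {c d : ℝ} (n : ℕ) (hn : n ≠ 0) {i : ℕ} (hi : n ≤ i) :
    grid c d n i = d := by
  have : min i n = n := min_eq_right hi
  have hn' : (n : ℝ) ≠ 0 := Nat.cast_ne_zero.mpr hn
  simp only [grid, this]
  rw [mul_div_assoc', mul_div_cancel_left₀ _ hn']
  ring

lemma grid_le {c d : ℝ} (hcd : c ≤ d) (n : ℕ) (i : ℕ) : grid c d n i ≤ d := by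
  rcases Nat.eq_zero_or_pos n with rfl | hn
  · simpa [grid] using hcd
  · calc grid c d n i ≤ grid c d n (max i n) := grid_mono hcd n (le_max_left _ _)
      _ = d := grid_eq_last n hn.ne' (le_max_right _ _)

lemma grid_ge {c d : ℝ} (hcd : c ≤ d) (n : ℕ) (i : ℕ) : c ≤ grid c d n i := by
  have := grid_mono hcd n (Nat.zero_le i)
  rwa [grid_zero] at this

lemma grid_step {c d : ℝ} {n : ℕ} {i : ℕ} (hi : i < n) :
    grid c d n (i + 1) - grid c d n i = (d - c) / n := by
  have h1 : min (i+1) n = i + 1 := min_eq_left (by omega)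
  have h2 : min i n = i := min_eq_left (by omega)
  simp only [grid, h1, h2]
  push_cast
  ring

lemma diam_image_le (f : ℝ → E) (s : Set ℝ) :
    EMetric.diam (f '' s) ≤ eVariationOn f s := by
  refine EMetric.diam_le ?_
  rintro _ ⟨p, hp, rfl⟩ _ ⟨q, hq, rfl⟩
  exact eVariationOn.edist_le f hp hq

lemma hausdorff_image_le {f : ℝ → E} {c d : ℝ} (hcd : c ≤ d)
    (hf : ContinuousOn f (Set.Icc c d)) :
    (μH[1] : Measure E) (f '' Set.Icc c d) ≤ eVariationOn f (Set.Icc c d) := by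
  have hunif := (isCompact_Icc.uniformContinuousOn_of_continuous hf)
  rw [Metric.uniformContinuousOn_iff] at hunif
  set t : ∀ k : ℕ, Fin (k+1) → Set E :=
    fun k i => f '' Set.Icc (grid c d (k+1) i) (grid c d (k+1) (i+1)) with ht_def
  have hpiece_sub : ∀ k : ℕ, ∀ i : ℕ,
      Set.Icc (grid c d (k+1) i) (grid c d (k+1) (i+1)) ⊆ Set.Icc c d := by
    intro k i
    exact Set.Icc_subset_Icc (grid_ge hcd _ _) (grid_le hcd _ _)
  set r : ℕ → ℝ≥0∞ := fun k => ⨆ i : Fin (k+1), EMetric.diam (t k i) with hr_def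
  have hr : Tendsto r atTop (nhds 0) := by
    rw [ENNReal.tendsto_atTop_zero]
    intro ε hε
    rcases eq_or_ne ε ⊤ with rfl | hεtop
    · exact ⟨0, fun k _ => le_top⟩
    have hε' : 0 < ε.toReal := ENNReal.toReal_pos hε.ne' hεtop
    obtain ⟨δ, hδ, hδ'⟩ := hunif ε.toReal hε'
    obtain ⟨N, hN⟩ := exists_nat_gt ((d - c) / δ)
    refine ⟨N, fun k hk => ?_⟩
    rw [hr_def]
    refine iSup_le fun i => ?_
    refine le_trans (EMetric.diam_le ?_) (le_of_eq (ENNReal.ofReal_toReal hεtop))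
    rintro _ ⟨p, hp, rfl⟩ _ ⟨q, hq, rfl⟩
    rw [edist_dist]
    refine ENNReal.ofReal_le_ofReal ?_
    have hlen : grid c d (k+1) ((i:ℕ)+1) - grid c d (k+1) (i:ℕ) = (d - c) / ((k:ℝ)+1) := by
      have h := grid_step (c := c) (d := d) (n := k+1) i.isLt
      push_cast at h ⊢
      linarith
    have hdelta : (d - c) / (k+1) < δ := by
      rw [div_lt_iff₀ (by positivity)]
      have h1 : (d - c) / δ < N := hN
      have h2 : (N : ℝ) ≤ k + 1 := by exact_mod_cast Nat.le_succ_of_le hk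
      rw [div_lt_iff₀ hδ] at h1
      nlinarith
    have hpq : dist p q < δ := by
      rw [Real.dist_eq, abs_sub_lt_iff]
      constructor <;> [linarith [hp.1, hp.2, hq.1, hq.2]; linarith [hp.1, hp.2, hq.1, hq.2]]
    exact (hδ' p (hpiece_sub k i hp) q (hpiece_sub k i hq) hpq).le
  have hst : ∀ k : ℕ, f '' Set.Icc c d ⊆ ⋃ i, t k i := by
    intro k
    rintro _ ⟨p, hp, rfl⟩
    rcases eq_or_lt_of_le hp.2 with hpd | hpd
    · refine Set.mem_iUnion.mpr ⟨Fin.last k, Set.mem_image_of_mem f ⟨?_, ?_⟩⟩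
      · rw [hpd]; exact grid_le hcd (k+1) _
      · rw [hpd, Fin.val_last, grid_eq_last (k+1) (Nat.succ_ne_zero k) (by omega)]
    · have hcover := Ico_subset_iUnion (grid c d (k+1)) (k+1)
        (by rw [grid_zero, grid_eq_last (k+1) (Nat.succ_ne_zero k) le_rfl]; exact ⟨hp.1, hpd⟩)
      simp only [Set.mem_iUnion, Finset.mem_range] at hcover
      obtain ⟨i, hik, hi1, hi2⟩ := hcover
      exact Set.mem_iUnion.mpr ⟨⟨i, hik⟩, Set.mem_image_of_mem f ⟨hi1, hi2.le⟩⟩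
  have hmain := MeasureTheory.Measure.hausdorffMeasure_le_liminf_sum 1 (f '' Set.Icc c d) r hr t
    (Eventually.of_forall (fun k i => le_iSup (fun i => EMetric.diam (t k i)) i))
    (Eventually.of_forall hst)
  refine hmain.trans ?_
  have hbound : ∀ k : ℕ, (∑ i : Fin (k+1), EMetric.diam (t k i) ^ (1:ℝ))
      ≤ eVariationOn f (Set.Icc c d) := by
    intro k
    have : ∀ i : Fin (k+1), EMetric.diam (t k i) ^ (1:ℝ)
        ≤ eVariationOn f (Set.Icc (grid c d (k+1) i) (grid c d (k+1) (i+1))) := by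
      intro i
      rw [ENNReal.rpow_one]
      exact diam_image_le f _
    calc (∑ i : Fin (k+1), EMetric.diam (t k i) ^ (1:ℝ))
        ≤ ∑ i : Fin (k+1), eVariationOn f (Set.Icc (grid c d (k+1) i) (grid c d (k+1) (i+1))) :=
          Finset.sum_le_sum fun i _ => this i
      _ = ∑ i ∈ Finset.range (k+1),
            eVariationOn f (Set.Icc (grid c d (k+1) i) (grid c d (k+1) (i+1))) :=
          Fin.sum_univ_eq_sum_range (fun j => eVariationOn f (Set.Icc (grid c d (k+1) j) (grid c d (k+1) (j+1)))) (k+1)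
      _ = eVariationOn f (Set.Icc (grid c d (k+1) 0) (grid c d (k+1) (k+1))) :=
          sum_eVar f (grid_mono hcd (k+1)) (k+1)
      _ = eVariationOn f (Set.Icc c d) := by
          rw [grid_zero, grid_eq_last (k+1) (Nat.succ_ne_zero k) le_rfl]
  exact le_trans (Filter.liminf_le_liminf (Eventually.of_forall hbound))
    (by simp [Filter.liminf_const])

lemma ofReal_norm_le_hausdorff_image {f : ℝ → E} {s t : ℝ} (hst : s ≤ t)
    (hf : ContinuousOn f (Set.Icc s t)) :
    ENNReal.ofReal ‖f t - f s‖ ≤ (μH[1] : Measure E) (f '' Set.Icc s t) := by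
  rcases eq_or_ne (f t - f s) 0 with h0 | h0
  · simp [h0]
  set Δ : E := f t - f s with hΔ
  have hΔn : ‖Δ‖ ≠ 0 := norm_ne_zero_iff.mpr h0
  set e : E := ‖Δ‖⁻¹ • Δ with he
  have hen : ‖e‖ = 1 := by
    rw [he, norm_smul, norm_inv, norm_norm, inv_mul_cancel₀ hΔn]
  set g : E → ℝ := fun y => (inner ℝ e y : ℝ) with hg
  have hlip : LipschitzWith 1 g := by
    refine LipschitzWith.of_dist_le_mul fun y z => ?_
    have h1 : g y - g z = (inner ℝ e (y - z) : ℝ) := by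
      simp [hg, inner_sub_right]
    rw [Real.dist_eq, h1, NNReal.coe_one, one_mul, dist_eq_norm]
    calc |(inner ℝ e (y - z) : ℝ)| ≤ ‖e‖ * ‖y - z‖ := abs_real_inner_le_norm e (y - z)
      _ = ‖y - z‖ := by rw [hen, one_mul]
  have hgd : g (f t) - g (f s) = ‖Δ‖ := by
    have : g (f t) - g (f s) = (inner ℝ e Δ : ℝ) := by simp [hg, hΔ, inner_sub_right]
    rw [this, he, real_inner_smul_left, real_inner_self_eq_norm_mul_norm]
    field_simp
  have hcont : ContinuousOn (fun p => g (f p)) (Set.Icc s t) :=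
    hlip.continuous.comp_continuousOn hf
  have hsub : Set.uIcc (g (f s)) (g (f t)) ⊆ (fun p => g (f p)) '' Set.Icc s t := by
    have := intermediate_value_uIcc (f := fun p => g (f p)) (a := s) (b := t)
      (by rwa [Set.uIcc_of_le hst])
    rwa [Set.uIcc_of_le hst] at this
  have hvol : ENNReal.ofReal ‖Δ‖ ≤ (volume : Measure ℝ) ((fun p => g (f p)) '' Set.Icc s t) := by
    have hveq : (volume : Measure ℝ) (Set.uIcc (g (f s)) (g (f t))) = ENNReal.ofReal ‖Δ‖ := by
      rw [Set.uIcc, Real.volume_Icc, max_sub_min_eq_abs, hgd, abs_norm]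
    exact le_trans (le_of_eq hveq.symm) (measure_mono hsub)
  have him := hlip.hausdorffMeasure_image_le zero_le_one (f '' Set.Icc s t)
  rw [ENNReal.coe_one, ENNReal.one_rpow, one_mul] at him
  calc ENNReal.ofReal ‖f t - f s‖
      ≤ (volume : Measure ℝ) ((fun p => g (f p)) '' Set.Icc s t) := hvol
    _ = (μH[1] : Measure ℝ) ((fun p => g (f p)) '' Set.Icc s t) := by
        rw [MeasureTheory.hausdorffMeasure_real]
    _ = (μH[1] : Measure ℝ) (g '' (f '' Set.Icc s t)) := by rw [← Set.image_comp]; rfl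
    _ ≤ (μH[1] : Measure E) (f '' Set.Icc s t) := him


lemma hausdorff_image_Icc_le_Ico (f : ℝ → E) (s t : ℝ) :
    (μH[1] : Measure E) (f '' Set.Icc s t) ≤ (μH[1] : Measure E) (f '' Set.Ico s t) := by
  haveI : NullSingletonClass (μH[1] : Measure E) := MeasureTheory.Measure.nullSingletonClass_hausdorff E one_pos
  have hsub : f '' Set.Icc s t ⊆ (f '' Set.Ico s t) ∪ {f t} := by
    rintro _ ⟨p, hp, rfl⟩
    rcases eq_or_lt_of_le hp.2 with hpt | hpt
    · exact Or.inr (by simp [hpt])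
    · exact Or.inl ⟨p, ⟨hp.1, hpt⟩, rfl⟩
  calc (μH[1] : Measure E) (f '' Set.Icc s t)
      ≤ (μH[1] : Measure E) ((f '' Set.Ico s t) ∪ {f t}) := measure_mono hsub
    _ ≤ (μH[1] : Measure E) (f '' Set.Ico s t) + (μH[1] : Measure E) {f t} := measure_union_le _ _
    _ = (μH[1] : Measure E) (f '' Set.Ico s t) := by rw [measure_singleton, add_zero]

lemma measurableSet_image_Ico {f : ℝ → E} {s t : ℝ}
    (hf : ContinuousOn f (Set.Icc s t)) : MeasurableSet (f '' Set.Ico s t) := by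
  rcases le_or_gt t s with h | h
  · rw [Set.Ico_eq_empty (not_lt.mpr h), Set.image_empty]
    exact MeasurableSet.empty
  · have hun : Set.Ico s t = ⋃ n : ℕ, Set.Icc s (t - (t - s) / (n + 1)) := by
      ext y
      constructor
      · rintro ⟨h1, h2⟩
        have hty : 0 < t - y := by linarith
        obtain ⟨n, hn⟩ := exists_nat_gt ((t - s) / (t - y))
        refine Set.mem_iUnion.mpr ⟨n, h1, ?_⟩
        have hn2 : t - s < (n : ℝ) * (t - y) := (div_lt_iff₀ hty).mp hn
        have : (t - s) / ((n : ℝ) + 1) < t - y := by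
          rw [div_lt_iff₀ (by positivity)]
          nlinarith [hty, Nat.cast_nonneg (α := ℝ) n]
        linarith
      · intro hy
        obtain ⟨n, h1, h2⟩ := Set.mem_iUnion.mp hy
        have hpos : (0:ℝ) < (t - s) / (n + 1) := div_pos (by linarith) (by positivity)
        exact ⟨h1, by linarith⟩
    rw [hun, Set.image_iUnion]
    refine MeasurableSet.iUnion fun n => ?_
    rcases le_or_gt s (t - (t - s) / (n + 1)) with hle | hlt
    · have hss : Set.Icc s (t - (t - s) / (n + 1)) ⊆ Set.Icc s t := by
        refine Set.Icc_subset_Icc le_rfl ?_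
        have hpos : (0:ℝ) ≤ (t - s) / (n + 1) := le_of_lt (div_pos (by linarith) (by positivity))
        linarith
      exact ((isCompact_Icc).image_of_continuousOn (hf.mono hss)).measurableSet
    · rw [Set.Icc_eq_empty (not_le.mpr hlt), Set.image_empty]
      exact MeasurableSet.empty

/-- Counting function of a tagged family of half-open pieces plus endpoint. -/
def cnt (f : ℝ → E) (b : ℝ) (g : ℕ → ℝ) (n : ℕ) (x : E) : ℝ≥0∞ :=
  (∑ i ∈ Finset.range n, (f '' Set.Ico (g i) (g (i+1))).indicator 1 x)
    + ({f b} : Set E).indicator 1 x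

lemma cnt_measurable (f : ℝ → E) (b : ℝ) (g : ℕ → ℝ) (n : ℕ)
    (hm : ∀ i, MeasurableSet (f '' Set.Ico (g i) (g (i+1)))) :
    Measurable (cnt f b g n) := by
  apply Measurable.add
  · apply Finset.measurable_sum
    intro i _
    exact measurable_one.indicator (hm i)
  · exact measurable_one.indicator (measurableSet_singleton _)

lemma lintegral_cnt (f : ℝ → E) (b : ℝ) (g : ℕ → ℝ) (n : ℕ)
    (hm : ∀ i, MeasurableSet (f '' Set.Ico (g i) (g (i+1)))) :
    ∫⁻ x, cnt f b g n x ∂(μH[1] : Measure E)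
      = ∑ i ∈ Finset.range n, (μH[1] : Measure E) (f '' Set.Ico (g i) (g (i+1))) := by
  haveI : NullSingletonClass (μH[1] : Measure E) := MeasureTheory.Measure.nullSingletonClass_hausdorff E one_pos
  unfold cnt
  rw [MeasureTheory.lintegral_add_right _ (measurable_one.indicator (measurableSet_singleton _)),
    MeasureTheory.lintegral_finset_sum _ (fun i _ => measurable_one.indicator (hm i)),
    MeasureTheory.lintegral_indicator_one (measurableSet_singleton _), measure_singleton, add_zero]
  exact Finset.sum_congr rfl fun i _ => MeasureTheory.lintegral_indicator_one (hm i)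

lemma cnt_le_encard (f : ℝ → E) {a b : ℝ} {g : ℕ → ℝ} (hg : Monotone g)
    (hga : a ≤ g 0) (hgb : ∀ i, g i ≤ b) (n : ℕ) (x : E) :
    cnt f b g n x ≤ (({t ∈ Set.Icc a b | f t = x}).encard : ℝ≥0∞) := by
  classical
  set J : ℕ → Set ℝ := fun i => Set.Ico (g i) (g (i+1)) with hJ
  set A := (Finset.range n).filter (fun i => x ∈ f '' J i) with hA
  set c : ℕ → ℝ := fun i => if h : x ∈ f '' J i then h.choose else 0 with hc
  have hcJ : ∀ i, x ∈ f '' J i → c i ∈ J i ∧ f (c i) = x := by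
    intro i h
    simp only [hc, dif_pos h]
    exact ⟨h.choose_spec.1, h.choose_spec.2⟩
  have hsum : (∑ i ∈ Finset.range n, (f '' J i).indicator (1 : E → ℝ≥0∞) x)
      = (A.card : ℝ≥0∞) := by
    rw [hA, ← Finset.sum_boole]
    exact Finset.sum_congr rfl fun i _ => by simp [Set.indicator_apply]
  have hsing : ({f b} : Set E).indicator (1 : E → ℝ≥0∞) x
      = if x = f b then 1 else 0 := by
    simp [Set.indicator_apply]
  have hinjc : Set.InjOn c ↑A := by
    intro i hi j hj hij
    obtain hi' := (Finset.mem_filter.mp (Finset.mem_coe.mp hi)).2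
    obtain hj' := (Finset.mem_filter.mp (Finset.mem_coe.mp hj)).2
    have h1 := (hcJ i hi').1
    have h2 := (hcJ j hj').1
    by_contra hne
    rcases lt_or_gt_of_ne hne with h | h
    · linarith [h1.2, h2.1, hg (show i+1 ≤ j by omega), hij]
    · linarith [h2.2, h1.1, hg (show j+1 ≤ i by omega), hij]
  set Fb : Finset ℝ := if x = f b then {b} else ∅ with hFb
  set F : Finset ℝ := A.image c ∪ Fb with hF
  have hcb : ∀ i ∈ A, c i ≠ b := by
    intro i hi
    have h1 := (hcJ i (Finset.mem_filter.mp hi).2).1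
    have := hgb (i+1)
    intro hcontra
    have := h1.2
    linarith
  have hdisj : Disjoint (A.image c) Fb := by
    rw [hFb]
    split_ifs
    · rw [Finset.disjoint_singleton_right]
      intro hmem
      obtain ⟨i, hi, hci⟩ := Finset.mem_image.mp hmem
      exact hcb i hi hci
    · exact Finset.disjoint_empty_right _
  have hcard : (F.card : ℝ≥0∞) = (A.card : ℝ≥0∞) + (if x = f b then 1 else 0) := by
    rw [hF, Finset.card_union_of_disjoint hdisj, Finset.card_image_of_injOn hinjc, hFb]
    split_ifs <;> simp
  have hFsub : (↑F : Set ℝ) ⊆ {t ∈ Set.Icc a b | f t = x} := by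
    intro y hy
    rw [hF] at hy
    simp only [Finset.coe_union, Set.mem_union, Finset.mem_coe, Finset.mem_image] at hy
    rcases hy with ⟨i, hi, rfl⟩ | hy
    · have hi' := (Finset.mem_filter.mp hi).2
      have h1 := (hcJ i hi').1
      have h2 := (hcJ i hi').2
      refine ⟨⟨?_, ?_⟩, h2⟩
      · have : g 0 ≤ g i := hg (Nat.zero_le i)
        have := h1.1
        linarith
      · have := h1.2
        have := hgb (i+1)
        linarith
    · rw [hFb] at hy
      split_ifs at hy with hxfb
      · have hyb : y = b := by
          have := Finset.mem_coe.mp hy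
          simpa using this
        subst hyb
        exact ⟨⟨hga.trans (hgb 0), le_rfl⟩, hxfb.symm⟩
      · exact absurd hy (by simp)
  calc cnt f b g n x = (A.card : ℝ≥0∞) + (if x = f b then 1 else 0) := by
        rw [cnt, hsum, hsing]
    _ = (F.card : ℝ≥0∞) := hcard.symm
    _ = (((↑F : Set ℝ).encard : ℕ∞) : ℝ≥0∞) := by
        rw [Set.encard_coe_eq_coe_finsetCard]; simp
    _ ≤ _ := ENat.toENNReal_le.mpr (Set.encard_mono hFsub)

lemma encard_le_liminf_cnt (f : ℝ → E) {a b : ℝ} (hab : a < b) (x : E) :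
    (({t ∈ Set.Icc a b | f t = x}).encard : ℝ≥0∞)
      ≤ Filter.liminf (fun k : ℕ => cnt f b (grid a b (k+1)) (k+1) x) Filter.atTop := by
  classical
  set fib := {t ∈ Set.Icc a b | f t = x} with hfib
  have key : ∀ F : Finset ℝ, (↑F : Set ℝ) ⊆ fib →
      (F.card : ℝ≥0∞)
        ≤ Filter.liminf (fun k : ℕ => cnt f b (grid a b (k+1)) (k+1) x) Filter.atTop := by
    intro F hF
    set F' := F.erase b with hF'
    have hF'F : (↑F' : Set ℝ) ⊆ fib := fun p hp =>
      hF (Finset.mem_coe.mpr (Finset.mem_of_mem_erase (Finset.mem_coe.mp hp)))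
    set D : Finset ℝ := ((F' ×ˢ F').filter fun pq => pq.1 ≠ pq.2).image
        (fun pq => |pq.1 - pq.2|) with hD
    have hDpos : ∀ y ∈ D, 0 < y := by
      intro y hy
      obtain ⟨⟨p, q⟩, hpq, rfl⟩ := Finset.mem_image.mp hy
      exact abs_pos.mpr (sub_ne_zero.mpr (Finset.mem_filter.mp hpq).2)
    set δ : ℝ := if h : D.Nonempty then min (D.min' h) 1 else 1 with hδdef
    have hδpos : 0 < δ := by
      rw [hδdef]; split_ifs with h
      · exact lt_min (hDpos _ (D.min'_mem h)) one_pos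
      · exact one_pos
    have hδle : ∀ p ∈ F', ∀ q ∈ F', p ≠ q → δ ≤ |p - q| := by
      intro p hp q hq hpq
      have hmem : |p - q| ∈ D := Finset.mem_image.mpr
        ⟨(p, q), Finset.mem_filter.mpr ⟨Finset.mem_product.mpr ⟨hp, hq⟩, hpq⟩, rfl⟩
      have hne : D.Nonempty := ⟨_, hmem⟩
      rw [hδdef, dif_pos hne]
      exact le_trans (min_le_left _ _) (D.min'_le _ hmem)
    obtain ⟨K, hK⟩ := exists_nat_gt ((b - a) / δ)
    have hev : ∀ k : ℕ, K ≤ k →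
        (F.card : ℝ≥0∞) ≤ cnt f b (grid a b (k+1)) (k+1) x := by
      intro k hk
      set g : ℕ → ℝ := grid a b (k+1) with hgdef
      have hmesh : (b - a) / (k + 1 : ℝ) < δ := by
        rw [div_lt_iff₀ (by positivity)]
        rw [div_lt_iff₀ hδpos] at hK
        have : (K : ℝ) ≤ k + 1 := by exact_mod_cast Nat.le_succ_of_le hk
        nlinarith
      have hcover : ∀ p : ℝ, ∃ i : ℕ, p ∈ F' →
          (i < k + 1 ∧ p ∈ Set.Ico (g i) (g (i+1))) := by
        intro p
        by_cases hp : p ∈ F'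
        · have hpfib : p ∈ fib := hF'F (Finset.mem_coe.mpr hp)
          have hpb : p ≠ b := (Finset.mem_erase.mp hp).1
          have hplt : p < b := lt_of_le_of_ne hpfib.1.2 hpb
          have hmem : p ∈ Set.Ico (g 0) (g (k+1)) := by
            rw [hgdef, grid_zero, grid_eq_last (k+1) (Nat.succ_ne_zero k) le_rfl]
            exact ⟨hpfib.1.1, hplt⟩
          have := Ico_subset_iUnion g (k+1) hmem
          simp only [Set.mem_iUnion, Finset.mem_range] at this
          obtain ⟨i, hik, hi⟩ := this
          exact ⟨i, fun _ => ⟨hik, hi⟩⟩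
        · exact ⟨0, fun h => absurd h hp⟩
      choose φ hφ using hcover
      have hφinj : Set.InjOn φ ↑F' := by
        intro p hp q hq hpq
        by_contra hne
        obtain ⟨hip, hmp⟩ := hφ p (Finset.mem_coe.mp hp)
        obtain ⟨hiq, hmq⟩ := hφ q (Finset.mem_coe.mp hq)
        have hd := hδle p (Finset.mem_coe.mp hp) q (Finset.mem_coe.mp hq) hne
        rw [hpq] at hmp
        have hlen : g (φ q + 1) - g (φ q) = (b - a) / (k+1 : ℝ) := by
          have := grid_step (c := a) (d := b) (n := k+1) hiq
          rw [hgdef, this]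
          push_cast
          ring_nf
        have : |p - q| < (b - a) / (k+1 : ℝ) := by
          rw [abs_sub_lt_iff]
          constructor <;> [skip; skip] <;>
            · have h1 := hmp.1; have h2 := hmp.2; have h3 := hmq.1; have h4 := hmq.2
              linarith
        linarith
      set B : Finset ℕ := F'.image φ with hB
      have hBsub : B ⊆ Finset.range (k+1) := by
        intro i hi
        obtain ⟨p, hp, rfl⟩ := Finset.mem_image.mp hi
        exact Finset.mem_range.mpr (hφ p hp).1
      have hBcard : B.card = F'.card := Finset.card_image_of_injOn hφinj
      have hind : ∀ i ∈ B, (f '' Set.Ico (g i) (g (i+1))).indicator (1 : E → ℝ≥0∞) x = 1 := by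
        intro i hi
        obtain ⟨p, hp, rfl⟩ := Finset.mem_image.mp hi
        have hfp : f p = x := (hF'F (Finset.mem_coe.mpr hp)).2
        have hx : x ∈ f '' Set.Ico (g (φ p)) (g (φ p + 1)) := ⟨p, (hφ p hp).2, hfp⟩
        rw [Set.indicator_of_mem hx, Pi.one_apply]
      have hsum_ge : (F'.card : ℝ≥0∞)
          ≤ ∑ i ∈ Finset.range (k+1), (f '' Set.Ico (g i) (g (i+1))).indicator 1 x := by
        calc (F'.card : ℝ≥0∞)
            = ∑ i ∈ B, (f '' Set.Ico (g i) (g (i+1))).indicator (1 : E → ℝ≥0∞) x := by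
              rw [Finset.sum_congr rfl hind, Finset.sum_const, hBcard]
              simp
          _ ≤ _ := Finset.sum_le_sum_of_subset hBsub
      by_cases hbF : b ∈ F
      · have hxfb : x = f b := ((hF (Finset.mem_coe.mpr hbF)).2).symm
        have hsing : ({f b} : Set E).indicator (1 : E → ℝ≥0∞) x = 1 := by
          rw [Set.indicator_of_mem (by simp [hxfb]), Pi.one_apply]
        have hcards : F.card = F'.card + 1 := (Finset.card_erase_add_one hbF).symm
        rw [cnt, hsing, hcards]
        push_cast
        exact add_le_add hsum_ge le_rfl
      · have hcards : F' = F := Finset.erase_eq_of_notMem hbF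
        rw [cnt]
        refine le_trans ?_ (le_add_right le_rfl)
        rw [← hcards]
        exact hsum_ge
    exact Filter.le_liminf_of_le (by isBoundedDefault)
      (Filter.eventually_atTop.mpr ⟨K, hev⟩)
  rcases Set.finite_or_infinite fib with hfin | hinf
  · have h1 : fib.encard = (hfin.toFinset.card : ℕ∞) :=
      Set.Finite.encard_eq_coe_toFinset_card hfin
    rw [h1, ENat.toENNReal_coe]
    exact key hfin.toFinset (by simp)
  · rw [Set.Infinite.encard_eq hinf]
    have htop : ∀ m : ℕ, (m : ℝ≥0∞)
        ≤ Filter.liminf (fun k : ℕ => cnt f b (grid a b (k+1)) (k+1) x) Filter.atTop := by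
      intro m
      obtain ⟨F, hFsub, hcard⟩ := hinf.exists_subset_card_eq m
      have := key F hFsub
      rwa [hcard] at this
    calc ((⊤ : ℕ∞) : ℝ≥0∞) = ⊤ := by simp
      _ = ⨆ m : ℕ, (m : ℝ≥0∞) := ENNReal.iSup_natCast.symm
      _ ≤ _ := iSup_le htop

lemma eVar_le_curveLength {f : ℝ → E} {a b : ℝ} (hab : a < b) :
    eVariationOn f (Set.Icc a b) ≤ curveLength f a b := by
  classical
  rw [eVariationOn]
  refine iSup_le ?_
  rintro ⟨n, u, hu, hmem⟩
  dsimp only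
  set S : Finset ℝ := insert a (insert b ((Finset.range (n+1)).image u)) with hS
  have haS : a ∈ S := Finset.mem_insert_self _ _
  have hbS : b ∈ S := Finset.mem_insert.mpr (Or.inr (Finset.mem_insert_self _ _))
  have huS : ∀ i, i ≤ n → u i ∈ S := by
    intro i hi
    refine Finset.mem_insert.mpr (Or.inr (Finset.mem_insert.mpr (Or.inr ?_)))
    exact Finset.mem_image.mpr ⟨i, Finset.mem_range.mpr (by omega), rfl⟩
  have hsub : ∀ y ∈ S, y ∈ Set.Icc a b := by
    intro y hy
    rcases Finset.mem_insert.mp hy with rfl | hy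
    · exact ⟨le_rfl, hab.le⟩
    rcases Finset.mem_insert.mp hy with rfl | hy
    · exact ⟨hab.le, le_rfl⟩
    obtain ⟨i, _, rfl⟩ := Finset.mem_image.mp hy
    exact hmem i
  have hcard : 1 < S.card := Finset.one_lt_card.mpr ⟨a, haS, b, hbS, hab.ne⟩
  obtain ⟨m, hm⟩ : ∃ m, S.card = m + 1 := ⟨S.card - 1, by omega⟩
  have hmpos : 0 < m := by omega
  set e := S.orderIsoOfFin hm with he
  set X : Fin (m+1) → ℝ := fun i => (e i : ℝ) with hX
  have hXmono : StrictMono X := fun i j hij => by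
    exact_mod_cast e.strictMono hij
  have hXS : ∀ i, X i ∈ S := fun i => (e i).2
  set idx : ℝ → Fin (m+1) := fun y => if h : y ∈ S then e.symm ⟨y, h⟩ else 0 with hidxdef
  have hidx : ∀ y, (h : y ∈ S) → X (idx y) = y := by
    intro y h
    simp only [hidxdef, dif_pos h, hX]
    exact congrArg Subtype.val (e.apply_symm_apply ⟨y, h⟩)
  have hfirst : X 0 = a := by
    refine le_antisymm ?_ (hsub _ (hXS 0)).1
    have := hXmono.monotone (Fin.zero_le (idx a))
    rwa [hidx a haS] at this
  have hlast : X (Fin.last m) = b := by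
    refine le_antisymm (hsub _ (hXS _)).2 ?_
    have := hXmono.monotone (Fin.le_last (idx b))
    rwa [hidx b hbS] at this
  set P : IntervalPartition a b := ⟨m, X, hXmono, hfirst, hlast⟩ with hP
  refine le_trans ?_ (le_iSup (fun Q : IntervalPartition a b => ENNReal.ofReal (inscribedSum f Q)) P)
  have hins : ENNReal.ofReal (inscribedSum f P)
      = ∑ j : Fin m, edist (f (X (Fin.succ j))) (f (X (Fin.castSucc j))) := by
    rw [inscribedSum, ENNReal.ofReal_sum_of_nonneg (fun _ _ => norm_nonneg _)]
    exact Finset.sum_congr rfl fun j _ => (edist_eq' _ _).symm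
  rw [hins]
  set T : Fin m → ℝ≥0∞ := fun j => edist (f (X (Fin.succ j))) (f (X (Fin.castSucc j))) with hT
  set A := (Finset.range n).filter (fun i => u i < u (i+1)) with hA
  have hAsum : ∑ i ∈ Finset.range n, edist (f (u (i+1))) (f (u i))
      = ∑ i ∈ A, edist (f (u (i+1))) (f (u i)) := by
    refine (Finset.sum_subset (Finset.filter_subset _ _) ?_).symm
    intro i hi hiA
    have hnl : ¬ u i < u (i+1) := fun h => hiA (Finset.mem_filter.mpr ⟨hi, h⟩)
    have heq : u (i+1) = u i := le_antisymm (not_lt.mp hnl) (hu (Nat.le_succ i))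
    rw [heq, edist_self]
  set σ : ℕ → Fin m := fun i => if h : ((idx (u i) : Fin (m+1)) : ℕ) < m
      then ⟨(idx (u i) : ℕ), h⟩ else ⟨0, hmpos⟩ with hσ
  have key : ∀ i ∈ A, X (Fin.castSucc (σ i)) = u i ∧ X (Fin.succ (σ i)) = u (i+1) := by
    intro i hiA
    have hin : i < n := Finset.mem_range.mp (Finset.mem_filter.mp hiA).1
    have hlt : u i < u (i+1) := (Finset.mem_filter.mp hiA).2
    have hui : u i ∈ S := huS i (by omega)
    have hui1 : u (i+1) ∈ S := huS (i+1) (by omega)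
    have hXj : X (idx (u i)) = u i := hidx _ hui
    have hXj1 : X (idx (u (i+1))) = u (i+1) := hidx _ hui1
    have hjm : ((idx (u i) : Fin (m+1)) : ℕ) < m := by
      by_contra hcon
      have hlt' := (idx (u i)).isLt
      have hj : ((idx (u i) : Fin (m+1)) : ℕ) = m := by omega
      have : idx (u i) = Fin.last m := Fin.ext hj
      rw [this, hlast] at hXj
      have := (hmem (i+1)).2
      linarith
    have hσi : σ i = ⟨((idx (u i) : Fin (m+1)) : ℕ), hjm⟩ := by
      rw [hσ]; exact dif_pos hjm
    have hcastid : Fin.castSucc (⟨((idx (u i) : Fin (m+1)) : ℕ), hjm⟩ : Fin m)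
        = idx (u i) := by
      apply Fin.ext; simp
    have hcast : X (Fin.castSucc (σ i)) = u i := by
      rw [hσi, hcastid, hXj]
    refine ⟨hcast, ?_⟩
    have hgap : ∀ y ∈ S, u i < y → u (i+1) ≤ y := by
      intro y hy hylt
      rcases Finset.mem_insert.mp hy with rfl | hy
      · exact absurd hylt (not_lt.mpr (hmem i).1)
      rcases Finset.mem_insert.mp hy with rfl | hy
      · exact (hmem (i+1)).2
      obtain ⟨kk, _, rfl⟩ := Finset.mem_image.mp hy
      rcases le_or_gt kk i with h | h
      · exact absurd hylt (not_lt.mpr (hu h))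
      · exact hu h
    have hjlt : idx (u i) < idx (u (i+1)) := by
      have h' : X (idx (u i)) < X (idx (u (i+1))) := by rw [hXj, hXj1]; exact hlt
      exact hXmono.lt_iff_lt.mp h'
    have hsucc_le : Fin.succ (σ i) ≤ idx (u (i+1)) := by
      rw [hσi, Fin.le_def, Fin.val_succ]
      exact hjlt
    have h2 : X (Fin.succ (σ i)) ≤ u (i+1) := by
      have := hXmono.monotone hsucc_le
      rwa [hXj1] at this
    have h3 : u (i+1) ≤ X (Fin.succ (σ i)) := by
      refine hgap _ (hXS _) ?_
      have hc := hXmono (Fin.castSucc_lt_succ (i := σ i))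
      rwa [hcast] at hc
    exact le_antisymm h2 h3
  have hinj : ∀ i ∈ A, ∀ j ∈ A, σ i = σ j → i = j := by
    intro i hi j hj hij
    by_contra hne
    have hi' := key i hi
    have hj' := key j hj
    have hiA := Finset.mem_filter.mp hi
    have hjA := Finset.mem_filter.mp hj
    rcases lt_or_gt_of_ne hne with h | h
    · have h1 : u (i+1) ≤ u j := hu (by omega)
      have hlt' : X (Fin.castSucc (σ i)) < X (Fin.castSucc (σ j)) := by
        rw [hi'.1, hj'.1]; exact lt_of_lt_of_le hiA.2 h1
      rw [hij] at hlt'; exact lt_irrefl _ hlt'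
    · have h1 : u (j+1) ≤ u i := hu (by omega)
      have hlt' : X (Fin.castSucc (σ j)) < X (Fin.castSucc (σ i)) := by
        rw [hi'.1, hj'.1]; exact lt_of_lt_of_le hjA.2 h1
      rw [hij] at hlt'; exact lt_irrefl _ hlt'
  calc ∑ i ∈ Finset.range n, edist (f (u (i+1))) (f (u i))
      = ∑ i ∈ A, edist (f (u (i+1))) (f (u i)) := hAsum
    _ = ∑ i ∈ A, T (σ i) := by
        refine Finset.sum_congr rfl fun i hi => ?_
        obtain ⟨h1, h2⟩ := key i hi
        rw [hT]; dsimp only; rw [h1, h2]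
    _ = ∑ j ∈ A.image σ, T j := (Finset.sum_image hinj).symm
    _ ≤ ∑ j : Fin m, T j := Finset.sum_le_sum_of_subset (Finset.subset_univ _)

end BanachAux

/-- For a continuous curve `C ↔ f : [a,b] → ℝ^M`, with multiplicity function
`N(f;x) = #{t ∈ [a,b] : f t = x}` (a value in `[0,+∞]`),
`ℓ(C) = ∫_{ℝ^M} N(f;x) dH¹(x)` where `H¹` is `1`-dimensional Hausdorff measure. -/
theorem length_eq_integral_multiplicity {M : ℕ} (a b : ℝ) (hab : a < b)
    (f : ℝ → EuclideanSpace ℝ (Fin M)) (hcont : ContinuousOn f (Set.Icc a b)) :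
    curveLength f a b =
      ∫⁻ x, (({t ∈ Set.Icc a b | f t = x}).encard : ℝ≥0∞)
        ∂(MeasureTheory.Measure.hausdorffMeasure 1 :
            Measure (EuclideanSpace ℝ (Fin M))) := by
  classical
  open BanachAux in
  apply le_antisymm
  · -- length ≤ integral
    rw [curveLength]
    refine iSup_le fun P => ?_
    set n := P.n with hn
    set g : ℕ → ℝ := fun i => P.x ⟨min i n, Nat.lt_succ_of_le (min_le_right _ _)⟩ with hg
    have hgmono : Monotone g := by
      intro i j hij
      exact P.mono.monotone (Fin.mk_le_mk.mpr (by omega))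
    have hga : g 0 = a := by
      have h0 : (⟨min 0 n, Nat.lt_succ_of_le (min_le_right _ _)⟩ : Fin (n+1)) = 0 := by
        apply Fin.ext; simp
      rw [hg]; dsimp only; rw [h0, P.first]
    have hgb : ∀ i, g i ≤ b := by
      intro i
      rw [hg]; dsimp only
      exact le_trans (P.mono.monotone (Fin.le_last _)) (le_of_eq P.last)
    have hgale : ∀ i, a ≤ g i := by
      intro i
      rw [← hga]; exact hgmono (Nat.zero_le i)
    have hgn : ∀ i : Fin n, g (i : ℕ) = P.x (Fin.castSucc i)
        ∧ g ((i : ℕ) + 1) = P.x (Fin.succ i) := by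
      intro i
      constructor
      · rw [hg]; dsimp only
        congr 1
        apply Fin.ext; simp [Nat.min_eq_left i.isLt.le]
      · rw [hg]; dsimp only
        congr 1
        apply Fin.ext; simp [Nat.min_eq_left (Nat.succ_le_of_lt i.isLt)]
    have hmeas : ∀ i, MeasurableSet (f '' Set.Ico (g i) (g (i+1))) := by
      intro i
      exact measurableSet_image_Ico
        (hcont.mono (Set.Icc_subset_Icc (hgale i) (hgb (i+1))))
    have hxmem : ∀ j : Fin (n+1), P.x j ∈ Set.Icc a b := by
      intro j
      constructor
      · exact le_trans (le_of_eq P.first.symm) (P.mono.monotone (Fin.zero_le _))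
      · exact le_trans (P.mono.monotone (Fin.le_last _)) (le_of_eq P.last)
    have hstep : ∀ i : Fin n, ENNReal.ofReal ‖f (P.x (Fin.succ i)) - f (P.x (Fin.castSucc i))‖
        ≤ (μH[1] : Measure (EuclideanSpace ℝ (Fin M)))
            (f '' Set.Ico (g (i : ℕ)) (g ((i : ℕ) + 1))) := by
      intro i
      obtain ⟨h1, h2⟩ := hgn i
      rw [h1, h2]
      refine le_trans (ofReal_norm_le_hausdorff_image
        (P.mono (Fin.castSucc_lt_succ (i := i))).le
        (hcont.mono (Set.Icc_subset_Icc (hxmem _).1 (hxmem _).2)))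
        (hausdorff_image_Icc_le_Ico f _ _)
    calc ENNReal.ofReal (inscribedSum f P)
        = ∑ i : Fin n, ENNReal.ofReal ‖f (P.x (Fin.succ i)) - f (P.x (Fin.castSucc i))‖ := by
          rw [inscribedSum, ENNReal.ofReal_sum_of_nonneg (fun _ _ => norm_nonneg _)]
      _ ≤ ∑ i : Fin n, (μH[1] : Measure (EuclideanSpace ℝ (Fin M)))
            (f '' Set.Ico (g (i : ℕ)) (g ((i : ℕ) + 1))) :=
          Finset.sum_le_sum fun i _ => hstep i
      _ = ∑ i ∈ Finset.range n, (μH[1] : Measure (EuclideanSpace ℝ (Fin M)))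
            (f '' Set.Ico (g i) (g (i+1))) :=
          Fin.sum_univ_eq_sum_range
            (fun j => (μH[1] : Measure (EuclideanSpace ℝ (Fin M)))
              (f '' Set.Ico (g j) (g (j+1)))) n
      _ = ∫⁻ x, cnt f b g n x
            ∂(μH[1] : Measure (EuclideanSpace ℝ (Fin M))) :=
          (lintegral_cnt f b g n hmeas).symm
      _ ≤ ∫⁻ x, (({t ∈ Set.Icc a b | f t = x}).encard : ℝ≥0∞)
            ∂(μH[1] : Measure (EuclideanSpace ℝ (Fin M))) :=
          MeasureTheory.lintegral_mono fun x =>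
            cnt_le_encard f hgmono hga.ge hgb n x
  · -- integral ≤ length
    have hmeas : ∀ k : ℕ, ∀ i, MeasurableSet
        (f '' Set.Ico (grid a b (k+1) i) (grid a b (k+1) (i+1))) := by
      intro k i
      exact measurableSet_image_Ico
        (hcont.mono (Set.Icc_subset_Icc (grid_ge hab.le _ _) (grid_le hab.le _ _)))
    have hbk : ∀ k : ℕ, (∫⁻ x, cnt f b (grid a b (k+1)) (k+1) x
          ∂(μH[1] : Measure (EuclideanSpace ℝ (Fin M))))
        ≤ eVariationOn f (Set.Icc a b) := by
      intro k
      rw [lintegral_cnt f b _ _ (hmeas k)]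
      calc ∑ i ∈ Finset.range (k+1), (μH[1] : Measure (EuclideanSpace ℝ (Fin M)))
            (f '' Set.Ico (grid a b (k+1) i) (grid a b (k+1) (i+1)))
          ≤ ∑ i ∈ Finset.range (k+1),
              eVariationOn f (Set.Icc (grid a b (k+1) i) (grid a b (k+1) (i+1))) := by
            refine Finset.sum_le_sum fun i _ => ?_
            refine le_trans (measure_mono (Set.image_mono Set.Ico_subset_Icc_self)) ?_
            exact hausdorff_image_le (grid_mono hab.le (k+1) (Nat.le_succ i))
              (hcont.mono (Set.Icc_subset_Icc (grid_ge hab.le _ _) (grid_le hab.le _ _)))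
        _ = eVariationOn f (Set.Icc (grid a b (k+1) 0) (grid a b (k+1) (k+1))) :=
            sum_eVar f (grid_mono hab.le (k+1)) (k+1)
        _ = eVariationOn f (Set.Icc a b) := by
            rw [grid_zero, grid_eq_last (k+1) (Nat.succ_ne_zero k) le_rfl]
    calc ∫⁻ x, (({t ∈ Set.Icc a b | f t = x}).encard : ℝ≥0∞)
          ∂(μH[1] : Measure (EuclideanSpace ℝ (Fin M)))
        ≤ ∫⁻ x, Filter.liminf (fun k : ℕ => cnt f b (grid a b (k+1)) (k+1) x) Filter.atTop
            ∂(μH[1] : Measure (EuclideanSpace ℝ (Fin M))) :=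
          MeasureTheory.lintegral_mono fun x => encard_le_liminf_cnt f hab x
      _ ≤ Filter.liminf (fun k : ℕ => ∫⁻ x, cnt f b (grid a b (k+1)) (k+1) x
            ∂(μH[1] : Measure (EuclideanSpace ℝ (Fin M)))) Filter.atTop :=
          MeasureTheory.lintegral_liminf_le fun k => cnt_measurable f b _ _ (hmeas k)
      _ ≤ eVariationOn f (Set.Icc a b) :=
          le_trans (Filter.liminf_le_liminf (Filter.Eventually.of_forall hbk))
            (by simp [Filter.liminf_const])
      _ ≤ curveLength f a b := eVar_le_curveLength hab


end
end

section
/- Let f : [a,b] → ℝ^M and g : [c,d] → ℝ^M (a < b, c < d) be curves that are Fréchet equivalent. Then the curves C ↔ f and D ↔ g have equal length: ℓ(C) = ℓ(D). -/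
open scoped BigOperators ENNReal
open MeasureTheory Filter

noncomputable section

lemma IntervalPartition.mem_Icc {a b : ℝ} (P : IntervalPartition a b) (i : Fin (P.n + 1)) :
    P.x i ∈ Set.Icc a b := by
  constructor
  · have h := P.mono.monotone (Fin.zero_le i); rwa [P.first] at h
  · have h := P.mono.monotone (Fin.le_last i); rwa [P.last] at h

lemma sum_est {M : ℕ} (f g : ℝ → EuclideanSpace ℝ (Fin M)) (n : ℕ)
    (x y : Fin (n + 1) → ℝ) (ε : ℝ)
    (h : ∀ i, ‖f (x i) - g (y i)‖ ≤ ε) :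
    (∑ i : Fin n, ‖f (x i.succ) - f (x i.castSucc)‖) ≤
      (∑ i : Fin n, ‖g (y i.succ) - g (y i.castSucc)‖) + 2 * n * ε := by
  have key : ∀ i : Fin n, ‖f (x i.succ) - f (x i.castSucc)‖ ≤
      ‖g (y i.succ) - g (y i.castSucc)‖ + 2 * ε := by
    intro i
    have hrw : f (x i.succ) - f (x i.castSucc) =
        (f (x i.succ) - g (y i.succ)) + (g (y i.succ) - g (y i.castSucc))
          - (f (x i.castSucc) - g (y i.castSucc)) := by abel
    calc ‖f (x i.succ) - f (x i.castSucc)‖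
        ≤ ‖(f (x i.succ) - g (y i.succ)) + (g (y i.succ) - g (y i.castSucc))‖
            + ‖f (x i.castSucc) - g (y i.castSucc)‖ := by rw [hrw]; exact norm_sub_le _ _
      _ ≤ ‖f (x i.succ) - g (y i.succ)‖ + ‖g (y i.succ) - g (y i.castSucc)‖
            + ‖f (x i.castSucc) - g (y i.castSucc)‖ := by
          gcongr; exact norm_add_le _ _
      _ ≤ ε + ‖g (y i.succ) - g (y i.castSucc)‖ + ε := by gcongr <;> [exact h _; exact h _]
      _ = ‖g (y i.succ) - g (y i.castSucc)‖ + 2 * ε := by ring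
  calc (∑ i : Fin n, ‖f (x i.succ) - f (x i.castSucc)‖)
      ≤ ∑ i : Fin n, (‖g (y i.succ) - g (y i.castSucc)‖ + 2 * ε) :=
        Finset.sum_le_sum fun i _ => key i
    _ = (∑ i : Fin n, ‖g (y i.succ) - g (y i.castSucc)‖) + 2 * n * ε := by
        rw [Finset.sum_add_distrib, Finset.sum_const, Finset.card_univ, Fintype.card_fin]
        ring_nf

lemma forward_est {M : ℕ} {a b c d : ℝ} (hab : a < b)
    {f g : ℝ → EuclideanSpace ℝ (Fin M)} {φ : ℝ → ℝ} (hφ : IsIncrHomeo φ a b c d)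
    {ε : ℝ} (hε : 0 < ε) (hclose : ∀ x ∈ Set.Icc a b, ‖f x - g (φ x)‖ < ε)
    (P : IntervalPartition a b) :
    ENNReal.ofReal (inscribedSum f P) ≤
      curveLength g c d + ENNReal.ofReal (2 * P.n * ε) := by
  obtain ⟨hcont, hmono, hfa, hfb⟩ := hφ
  set Q : IntervalPartition c d :=
    { n := P.n
      x := fun i => φ (P.x i)
      mono := fun i j hij => hmono (P.mem_Icc i) (P.mem_Icc j) (P.mono hij)
      first := by show φ (P.x 0) = c; rw [P.first, hfa]
      last := by show φ (P.x (Fin.last P.n)) = d; rw [P.last, hfb] }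
  have hsum : inscribedSum f P ≤ inscribedSum g Q + 2 * P.n * ε :=
    sum_est f g P.n P.x (fun i => φ (P.x i)) ε
      (fun i => (hclose _ (P.mem_Icc i)).le)
  calc ENNReal.ofReal (inscribedSum f P)
      ≤ ENNReal.ofReal (inscribedSum g Q + 2 * P.n * ε) := ENNReal.ofReal_le_ofReal hsum
    _ ≤ ENNReal.ofReal (inscribedSum g Q) + ENNReal.ofReal (2 * P.n * ε) :=
        ENNReal.ofReal_add_le
    _ ≤ curveLength g c d + ENNReal.ofReal (2 * P.n * ε) := by
        gcongr; exact le_iSup (fun Q : IntervalPartition c d => ENNReal.ofReal (inscribedSum g Q)) Q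

lemma backward_est {M : ℕ} {a b c d : ℝ} (hab : a < b)
    {f g : ℝ → EuclideanSpace ℝ (Fin M)} {φ : ℝ → ℝ} (hφ : IsIncrHomeo φ a b c d)
    {ε : ℝ} (hε : 0 < ε) (hclose : ∀ x ∈ Set.Icc a b, ‖f x - g (φ x)‖ < ε)
    (Q : IntervalPartition c d) :
    ENNReal.ofReal (inscribedSum g Q) ≤
      curveLength f a b + ENNReal.ofReal (2 * Q.n * ε) := by
  obtain ⟨hcont, hmono, hfa, hfb⟩ := hφ
  have hsurj : ∀ i : Fin (Q.n + 1), ∃ x ∈ Set.Icc a b, φ x = Q.x i := by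
    intro i
    have h1 : Set.Icc (φ a) (φ b) ⊆ φ '' Set.Icc a b := intermediate_value_Icc hab.le hcont
    have h2 : Q.x i ∈ Set.Icc (φ a) (φ b) := by rw [hfa, hfb]; exact Q.mem_Icc i
    obtain ⟨x, hx, hxe⟩ := h1 h2
    exact ⟨x, hx, hxe⟩
  choose ξ hξmem hξeq using hsurj
  have hmem : ∀ i, ξ i ∈ Set.Icc a b := hξmem
  set P : IntervalPartition a b :=
    { n := Q.n
      x := ξ
      mono := fun i j hij => by
        have : φ (ξ i) < φ (ξ j) := by rw [hξeq, hξeq]; exact Q.mono hij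
        exact (hmono.lt_iff_lt (hmem i) (hmem j)).mp this
      first := by
        have : φ (ξ 0) = φ a := by rw [hξeq, Q.first, hfa]
        exact hmono.injOn (hmem 0) (Set.left_mem_Icc.mpr hab.le) this
      last := by
        have : φ (ξ (Fin.last Q.n)) = φ b := by rw [hξeq, Q.last, hfb]
        exact hmono.injOn (hmem _) (Set.right_mem_Icc.mpr hab.le) this }
  have hsum : inscribedSum g Q ≤ inscribedSum f P + 2 * Q.n * ε := by
    have := sum_est g f Q.n Q.x ξ ε (fun i => by
      rw [← hξeq i, norm_sub_rev]; exact (hclose _ (hmem i)).le)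
    exact this
  calc ENNReal.ofReal (inscribedSum g Q)
      ≤ ENNReal.ofReal (inscribedSum f P + 2 * Q.n * ε) := ENNReal.ofReal_le_ofReal hsum
    _ ≤ ENNReal.ofReal (inscribedSum f P) + ENNReal.ofReal (2 * Q.n * ε) :=
        ENNReal.ofReal_add_le
    _ ≤ curveLength f a b + ENNReal.ofReal (2 * Q.n * ε) := by
        gcongr; exact le_iSup (fun P : IntervalPartition a b => ENNReal.ofReal (inscribedSum f P)) P

/-- Fréchet equivalent curves have equal length: if `f : [a,b] → ℝ^M` and
`g : [c,d] → ℝ^M` are Fréchet equivalent, then `ℓ(C) = ℓ(D)`. -/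
theorem length_eq_of_frechetEquiv {M : ℕ} (a b c d : ℝ) (hab : a < b) (hcd : c < d)
    (f g : ℝ → EuclideanSpace ℝ (Fin M)) (hfg : FrechetEquiv f a b g c d) :
    curveLength f a b = curveLength g c d := by
  apply le_antisymm
  · refine iSup_le fun P => ?_
    refine ENNReal.le_of_forall_pos_le_add fun ε' hε' _ => ?_
    set ε : ℝ := ε' / (2 * P.n + 1) with hεdef
    have hεpos : 0 < ε := by
      apply div_pos (by exact_mod_cast hε') (by positivity)
    obtain ⟨φ, hφ, hclose⟩ := hfg ε hεpos
    refine (forward_est hab hφ hεpos hclose P).trans ?_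
    gcongr
    rw [← ENNReal.ofReal_coe_nnreal]
    apply ENNReal.ofReal_le_ofReal
    have h1 : 2 * (P.n : ℝ) * ε = (ε' : ℝ) * (2 * P.n / (2 * P.n + 1)) := by
      rw [hεdef]; ring
    rw [h1]
    refine mul_le_of_le_one_right (by positivity) ?_
    rw [div_le_one (by positivity)]
    linarith
  · refine iSup_le fun Q => ?_
    refine ENNReal.le_of_forall_pos_le_add fun ε' hε' _ => ?_
    set ε : ℝ := ε' / (2 * Q.n + 1) with hεdef
    have hεpos : 0 < ε := by
      apply div_pos (by exact_mod_cast hε') (by positivity)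
    obtain ⟨φ, hφ, hclose⟩ := hfg ε hεpos
    refine (backward_est hab hφ hεpos hclose Q).trans ?_
    gcongr
    rw [← ENNReal.ofReal_coe_nnreal]
    apply ENNReal.ofReal_le_ofReal
    have h1 : 2 * (Q.n : ℝ) * ε = (ε' : ℝ) * (2 * Q.n / (2 * Q.n + 1)) := by
      rw [hεdef]; ring
    rw [h1]
    refine mul_le_of_le_one_right (by positivity) ?_
    rw [div_le_one (by positivity)]
    linarith

end
end
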